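/- arXiv:2210.08572 — 7 statements merged into one kernel-verified Lean document; each statement's English description precedes it below -/
import Mathlib

section
/- Unbiasedness of the pruning strategy: let w₁, …, w_m be positive real weights and define a random index process J₁, …, J_m by J₁ = 1 and, for each n < m, J_{n+1} = n+1 with probability w_{n+1}/(w₁ + ⋯ + w_{n+1}) and J_{n+1} = J_n otherwise, with these choices made independently. Then for every j ≤ m, P(J_m = j) = w_j/(w₁ + ⋯ + w_m). -/
open MeasureTheory Filter Topology ProbabilityTheory Set

noncomputable section

/-- Deterministic version of the pruning index process, as a function of the
underlying uniform samples. -/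
noncomputable def pruneF (m : ℕ) (hm : 0 < m) (w : Fin m → ℝ) : ℕ → (Fin m → ℝ) → Fin m
  | 0 => fun _ => ⟨0, hm⟩
  | (n+1) => fun u =>
      if h : n + 1 < m then
        (if u ⟨n+1, h⟩ <
            w ⟨n+1, h⟩ / (∑ i ∈ Finset.univ.filter (fun i : Fin m => (i : ℕ) ≤ n+1), w i)
         then ⟨n+1, h⟩ else pruneF m hm w n u)
      else pruneF m hm w n u

lemma pruneF_le (m : ℕ) (hm : 0 < m) (w : Fin m → ℝ) :
    ∀ n u, ((pruneF m hm w n u : Fin m) : ℕ) ≤ n := by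
  intro n
  induction n with
  | zero => intro u; simp [pruneF]
  | succ n ih =>
    intro u
    simp only [pruneF]
    split_ifs with h h'
    · simp
    · exact (ih u).trans (Nat.le_succ n)
    · exact (ih u).trans (Nat.le_succ n)

lemma pruneF_congr (m : ℕ) (hm : 0 < m) (w : Fin m → ℝ) :
    ∀ n (u v : Fin m → ℝ), (∀ i : Fin m, (i : ℕ) ≤ n → u i = v i) →
      pruneF m hm w n u = pruneF m hm w n v := by
  intro n
  induction n with
  | zero => intro u v _; simp [pruneF]
  | succ n ih =>
    intro u v huv
    have hrec : pruneF m hm w n u = pruneF m hm w n v :=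
      ih u v fun i hi => huv i (hi.trans (Nat.le_succ n))
    simp only [pruneF]
    split_ifs with h h' h'' h''
    · rfl
    · exact absurd (by rw [← huv ⟨n+1, h⟩ le_rfl]; exact h') h''
    · exact absurd (by rw [huv ⟨n+1, h⟩ le_rfl]; exact h'') h'
    · exact hrec
    · exact hrec

lemma pruneF_measurable (m : ℕ) (hm : 0 < m) (w : Fin m → ℝ) :
    ∀ n, Measurable (pruneF m hm w n) := by
  intro n
  induction n with
  | zero => simpa [pruneF] using measurable_const
  | succ n ih =>
    simp only [pruneF]
    split_ifs with h
    · exact Measurable.ite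
        (measurableSet_lt (measurable_pi_apply _) measurable_const)
        measurable_const ih
    · exact ih

/-- **Unbiasedness of the pruning strategy.**  Let `w 0, …, w (m-1)` be positive real
weights and let the random index process `J` be defined by `J 0 = 0` and, for each `n`,
`J (n+1) = n+1` with probability `w (n+1) / (w 0 + ⋯ + w (n+1))` and `J (n+1) = J n`
otherwise, these choices being made independently (here realized by independent uniform
random variables `U i` on `[0,1]`).  Then for every index `j`,
`P(J (m-1) = j) = w j / (w 0 + ⋯ + w (m-1))`. -/
theorem pruning_unbiased
    {Ω : Type*} [MeasurableSpace Ω] (μ : Measure Ω) [IsProbabilityMeasure μ]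
    (m : ℕ) (hm : 0 < m) (w : Fin m → ℝ) (hw : ∀ i, 0 < w i)
    (U : Fin m → Ω → ℝ) (hUmeas : ∀ i, Measurable (U i))
    (hUindep : iIndepFun U μ)
    (hUunif : ∀ i, μ.map (U i) = volume.restrict (Set.Icc (0 : ℝ) 1))
    (J : ℕ → Ω → Fin m)
    (hJ0 : ∀ ω, J 0 ω = ⟨0, hm⟩)
    (hJstep : ∀ (n : ℕ) (h : n + 1 < m) (ω : Ω),
      J (n + 1) ω =
        if U ⟨n + 1, h⟩ ω <
            w ⟨n + 1, h⟩ / (∑ i ∈ Finset.univ.filter (fun i : Fin m => (i : ℕ) ≤ n + 1), w i)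
        then ⟨n + 1, h⟩ else J n ω) :
    ∀ j : Fin m, μ {ω | J (m - 1) ω = j} = ENNReal.ofReal (w j / ∑ i, w i) := by
  -- partial sums
  set S : ℕ → ℝ := fun n => ∑ i ∈ Finset.univ.filter (fun i : Fin m => (i : ℕ) ≤ n), w i with hS
  have hSpos : ∀ n, 0 < S n := by
    intro n
    refine Finset.sum_pos (fun i _ => hw i) ⟨⟨0, hm⟩, ?_⟩
    simp
  -- representation of J through pruneF
  have hrep : ∀ n, n < m → ∀ ω, J n ω = pruneF m hm w n (fun i => U i ω) := by
    intro n
    induction n with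
    | zero => intro _ ω; rw [hJ0 ω]; rfl
    | succ n ih =>
      intro hn1 ω
      have hn : n < m := Nat.lt_of_succ_lt hn1
      rw [hJstep n hn1 ω]
      show _ = pruneF m hm w (n+1) (fun i => U i ω)
      simp only [pruneF, dif_pos hn1]
      rw [ih hn ω]
  have hJle : ∀ n, n < m → ∀ ω, ((J n ω : Fin m) : ℕ) ≤ n := by
    intro n hn ω
    rw [hrep n hn ω]
    exact pruneF_le m hm w n _
  -- S (n+1) = S n + w (n+1)
  have hSsucc : ∀ n (h : n + 1 < m), S (n + 1) = S n + w ⟨n+1, h⟩ := by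
    intro n h
    have hfil : Finset.univ.filter (fun i : Fin m => (i : ℕ) ≤ n + 1)
        = insert (⟨n+1, h⟩ : Fin m) (Finset.univ.filter (fun i : Fin m => (i : ℕ) ≤ n)) := by
      ext i
      simp only [Finset.mem_filter, Finset.mem_univ, true_and, Finset.mem_insert, Fin.ext_iff]
      omega
    have hnm : (⟨n+1, h⟩ : Fin m) ∉ Finset.univ.filter (fun i : Fin m => (i : ℕ) ≤ n) := by
      simp
    rw [hS]
    simp only [hfil, Finset.sum_insert hnm]
    ring
  -- uniform probabilities
  have hUprob_lt : ∀ (i : Fin m) (p : ℝ), 0 ≤ p → p ≤ 1 →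
      μ (U i ⁻¹' Set.Iio p) = ENNReal.ofReal p := by
    intro i p hp0 hp1
    rw [← Measure.map_apply (hUmeas i) measurableSet_Iio, hUunif i,
      Measure.restrict_apply measurableSet_Iio]
    have : Set.Iio p ∩ Set.Icc (0:ℝ) 1 = Set.Ico 0 p := by
      ext x
      simp only [Set.mem_inter_iff, Set.mem_Iio, Set.mem_Icc, Set.mem_Ico]
      constructor
      · rintro ⟨h1, h2, _⟩; exact ⟨h2, h1⟩
      · rintro ⟨h1, h2⟩; exact ⟨h2, h1, le_trans h2.le hp1⟩
    rw [this, Real.volume_Ico, sub_zero]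
  have hUprob_ge : ∀ (i : Fin m) (p : ℝ), 0 ≤ p → p ≤ 1 →
      μ (U i ⁻¹' Set.Ici p) = ENNReal.ofReal (1 - p) := by
    intro i p hp0 hp1
    rw [← Measure.map_apply (hUmeas i) measurableSet_Ici, hUunif i,
      Measure.restrict_apply measurableSet_Ici]
    have : Set.Ici p ∩ Set.Icc (0:ℝ) 1 = Set.Icc p 1 := by
      ext x
      simp only [Set.mem_inter_iff, Set.mem_Ici, Set.mem_Icc]
      constructor
      · rintro ⟨h1, _, h3⟩; exact ⟨h1, h3⟩
      · rintro ⟨h1, h2⟩; exact ⟨h1, hp0.trans h1, h2⟩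
    rw [this, Real.volume_Icc]
  -- independence of U (n+1) and J n
  have hindep : ∀ n (h : n + 1 < m), IndepFun (U ⟨n+1, h⟩) (J n) μ := by
    intro n h
    have hn : n < m := Nat.lt_of_succ_lt h
    set T : Finset (Fin m) := Finset.univ.filter (fun i : Fin m => (i : ℕ) ≤ n) with hT
    have hdisj : Disjoint ({(⟨n+1, h⟩ : Fin m)} : Finset (Fin m)) T := by
      rw [Finset.disjoint_singleton_left, hT]
      simp
    have base := hUindep.indepFun_finset {(⟨n+1, h⟩ : Fin m)} T hdisj hUmeas
    set ψ : ({i : Fin m // i ∈ ({(⟨n+1, h⟩ : Fin m)} : Finset (Fin m))} → ℝ) → ℝ :=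
      fun x => x ⟨⟨n+1, h⟩, Finset.mem_singleton_self _⟩ with hψ
    set φ : ({i : Fin m // i ∈ T} → ℝ) → Fin m :=
      fun x => pruneF m hm w n (fun i => if hi : i ∈ T then x ⟨i, hi⟩ else 0) with hφ
    have ψmeas : Measurable ψ := measurable_pi_apply _
    have φmeas : Measurable φ := by
      refine (pruneF_measurable m hm w n).comp ?_
      refine measurable_pi_lambda _ fun i => ?_
      by_cases hi : i ∈ T
      · simp only [dif_pos hi]
        exact measurable_pi_apply _
      · simp only [dif_neg hi]
        exact measurable_const
    have hcomp := base.comp ψmeas φmeas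
    have h1 : (ψ ∘ fun a (i : ({(⟨n+1, h⟩ : Fin m)} : Finset (Fin m))) => U i a)
        = U ⟨n+1, h⟩ := by
      funext ω; rfl
    have h2 : (φ ∘ fun a (i : (T : Finset (Fin m))) => U i a) = J n := by
      funext ω
      show pruneF m hm w n (fun i => if hi : i ∈ T then U i ω else 0) = J n ω
      rw [hrep n hn ω]
      apply pruneF_congr
      intro i hi
      have hiT : i ∈ T := by rw [hT]; simp [hi]
      simp [dif_pos hiT]
    rwa [h1, h2] at hcomp
  -- main induction
  have key : ∀ n, n < m → ∀ j : Fin m, (j : ℕ) ≤ n →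
      μ {ω | J n ω = j} = ENNReal.ofReal (w j / S n) := by
    intro n
    induction n with
    | zero =>
      intro _ j hj
      have hj0 : j = ⟨0, hm⟩ := by
        have hv : (j : ℕ) = 0 := Nat.le_zero.mp hj
        exact Fin.ext hv
      have hset : {ω | J 0 ω = j} = Set.univ := by
        ext ω; simp [hJ0 ω, hj0]
      have hS0 : S 0 = w ⟨0, hm⟩ := by
        have hfil : Finset.univ.filter (fun i : Fin m => (i : ℕ) ≤ 0)
            = ({⟨0, hm⟩} : Finset (Fin m)) := by
          ext i
          simp only [Finset.mem_filter, Finset.mem_univ, true_and, Finset.mem_singleton,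
            Fin.ext_iff, Nat.le_zero]
        rw [hS]
        show (∑ i ∈ Finset.univ.filter (fun i : Fin m => (i : ℕ) ≤ 0), w i) = w ⟨0, hm⟩
        rw [hfil, Finset.sum_singleton]
      rw [hset, measure_univ, hj0, hS0, div_self (hw _).ne', ENNReal.ofReal_one]
    | succ n ih =>
      intro hn1 j hj
      have hn : n < m := Nat.lt_of_succ_lt hn1
      set i1 : Fin m := ⟨n+1, hn1⟩ with hi1
      set p : ℝ := w i1 / S (n+1) with hp
      have hwle : w i1 ≤ S (n+1) := by
        rw [hSsucc n hn1]
        linarith [hSpos n]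
      have hp0 : 0 ≤ p := le_of_lt (div_pos (hw i1) (hSpos (n+1)))
      have hp1 : p ≤ 1 := (div_le_one (hSpos (n+1))).2 hwle
      by_cases hji : j = i1
      · -- j = n+1
        have hset : {ω | J (n+1) ω = j} = U i1 ⁻¹' Set.Iio p := by
          ext ω
          simp only [Set.mem_setOf_eq, Set.mem_preimage, Set.mem_Iio]
          rw [hJstep n hn1 ω]
          constructor
          · intro hJ
            by_contra hlt
            rw [if_neg hlt] at hJ
            have hle := hJle n hn ω
            rw [hJ, hji, hi1] at hle
            exact Nat.not_succ_le_self n hle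
          · intro hlt
            rw [if_pos hlt, hji]
        rw [hset, hUprob_lt i1 p hp0 hp1, hji]
      · -- j ≤ n
        have hjn : (j : ℕ) ≤ n := by
          by_contra hcon
          have hv : (j : ℕ) = n + 1 := by omega
          exact hji (Fin.ext hv)
        have hset : {ω | J (n+1) ω = j} = (U i1 ⁻¹' Set.Ici p) ∩ (J n ⁻¹' {j}) := by
          ext ω
          simp only [Set.mem_setOf_eq, Set.mem_inter_iff, Set.mem_preimage, Set.mem_Ici,
            Set.mem_singleton_iff]
          rw [hJstep n hn1 ω]
          constructor
          · intro hJ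
            by_cases hlt : U i1 ω < p
            · rw [if_pos hlt] at hJ
              exact absurd hJ.symm hji
            · rw [if_neg hlt] at hJ
              exact ⟨not_lt.1 hlt, hJ⟩
          · rintro ⟨hge, hJ⟩
            rw [if_neg (not_lt.2 hge)]
            exact hJ
        have hmul := (hindep n hn1).measure_inter_preimage_eq_mul
          (Set.Ici p) {j} measurableSet_Ici (measurableSet_singleton j)
        rw [hset, hmul, hUprob_ge i1 p hp0 hp1]
        have hIH : μ (J n ⁻¹' {j}) = ENNReal.ofReal (w j / S n) := ih hn j hjn
        rw [hIH]
        have h1p : 1 - p = S n / S (n+1) := by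
          have hd : S (n+1) - w i1 = S n := by rw [hSsucc n hn1]; ring
          rw [hp, one_sub_div (hSpos (n+1)).ne', hd]
        have hSn0 : S n ≠ 0 := (hSpos n).ne'
        have hSn10 : S (n+1) ≠ 0 := (hSpos (n+1)).ne'
        rw [h1p, ← ENNReal.ofReal_mul (le_of_lt (div_pos (hSpos n) (hSpos (n+1))))]
        congr 1
        field_simp
  -- conclusion
  intro j
  have hm1 : m - 1 < m := Nat.sub_lt hm one_pos
  have hjm : (j : ℕ) ≤ m - 1 := Nat.le_sub_one_of_lt j.isLt
  have hSm : S (m - 1) = ∑ i, w i := by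
    have hfil : Finset.univ.filter (fun i : Fin m => (i : ℕ) ≤ m - 1)
        = (Finset.univ : Finset (Fin m)) := by
      ext i
      simp only [Finset.mem_filter, Finset.mem_univ, true_and, iff_true]
      have := i.isLt
      omega
    rw [hS]
    show (∑ i ∈ Finset.univ.filter (fun i : Fin m => (i : ℕ) ≤ m - 1), w i) = ∑ i, w i
    rw [hfil]
  rw [key (m-1) hm1 j hjm, hSm]

end
end

section
/- Left jump rate of an inversion-parameterized Geometric variable: fix p ∈ (0,1) and on Ω = [0,1] with the uniform measure define X(q)(ω) to be the unique nonnegative integer x with 1−(1−q)ˣ ≤ ω < 1−(1−q)^{x+1}, so that X(q) is Geometric with success probability q: P(X(q)=x) = q(1−q)ˣ for x = 0,1,2,…. Then for every integer x ≥ 1, lim_{ε→0⁺} P(X(p+ε) = x−1 | X(p) = x)/ε = x/(p(1−p)). -/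
open MeasureTheory Filter Topology ProbabilityTheory Set

noncomputable section

/-- **Left jump rate of an inversion-parameterized Geometric variable.**  Fix `p ∈ (0,1)`
and on `Ω = [0,1]` with the uniform measure define `X q ω` to be the unique nonnegative
integer `x` with `1 - (1-q)^x ≤ ω < 1 - (1-q)^(x+1)`, so that `X q` is Geometric with
success probability `q`: `P(X q = x) = q(1-q)^x` for `x = 0, 1, 2, …`.  Then for every
integer `x ≥ 1`, `lim_{ε→0⁺} P(X (p+ε) = x - 1 | X p = x)/ε = x/(p(1-p))`. -/
theorem geometric_left_jump_rate
    (p : ℝ) (hp : p ∈ Set.Ioo (0 : ℝ) 1)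
    (μ : Measure ℝ) (hμ : μ = volume.restrict (Set.Icc (0 : ℝ) 1))
    (X : ℝ → ℝ → ℕ)
    (hX : ∀ q ∈ Set.Ioo (0 : ℝ) 1, ∀ ω ∈ Set.Ico (0 : ℝ) 1,
      1 - (1 - q) ^ (X q ω) ≤ ω ∧ ω < 1 - (1 - q) ^ (X q ω + 1))
    (x : ℕ) (hx : 1 ≤ x) :
    Tendsto
      (fun ε : ℝ => ((μ[|{ω | X p ω = x}]) {ω | X (p + ε) ω = x - 1}).toReal / ε)
      (𝓝[>] (0 : ℝ)) (𝓝 ((x : ℝ) / (p * (1 - p)))) := by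
  obtain ⟨hp0, hp1⟩ := hp
  have hr0 : (0:ℝ) < 1 - p := by linarith
  have hr1 : (1:ℝ) - p < 1 := by linarith
  -- key set identity
  have key : ∀ q ∈ Set.Ioo (0:ℝ) 1, ∀ y : ℕ,
      {ω | X q ω = y} ∩ Set.Ico (0:ℝ) 1
        = Set.Ico (1 - (1-q)^y) (1 - (1-q)^(y+1)) := by
    intro q hq y
    have hq0 : (0:ℝ) ≤ 1 - q := by linarith [hq.2]
    have hq1 : (1:ℝ) - q ≤ 1 := by linarith [hq.1]
    ext ω
    constructor
    · rintro ⟨hωy, hω01⟩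
      obtain ⟨h1, h2⟩ := hX q hq ω hω01
      rw [Set.mem_setOf_eq] at hωy
      rw [hωy] at h1 h2
      exact ⟨h1, h2⟩
    · rintro ⟨ha, hb⟩
      have hω0 : (0:ℝ) ≤ ω := by
        have : (1-q)^y ≤ 1 := pow_le_one₀ hq0 hq1
        linarith
      have hω1 : ω < 1 := by
        have : (0:ℝ) ≤ (1-q)^(y+1) := pow_nonneg hq0 _
        linarith
      obtain ⟨h1, h2⟩ := hX q hq ω ⟨hω0, hω1⟩
      refine ⟨?_, ⟨hω0, hω1⟩⟩
      rw [Set.mem_setOf_eq]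
      by_contra hne
      rcases lt_or_gt_of_ne hne with hlt | hgt
      · have : (1-q)^y ≤ (1-q)^(X q ω + 1) :=
          pow_le_pow_of_le_one hq0 hq1 (by omega)
        linarith
      · have : (1-q)^(X q ω) ≤ (1-q)^(y+1) :=
          pow_le_pow_of_le_one hq0 hq1 (by omega)
        linarith
  set s := {ω | X p ω = x} with hs
  set a := 1 - (1-p)^x with ha
  set b := 1 - (1-p)^(x+1) with hb
  have hab01 : Set.Ico a b ⊆ Set.Ico (0:ℝ) 1 := by
    intro ω hω
    constructor
    · have : (1-p)^x ≤ 1 := pow_le_one₀ hr0.le hr1.le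
      have := hω.1; rw [ha] at this; linarith
    · have : (0:ℝ) ≤ (1-p)^(x+1) := pow_nonneg hr0.le _
      have := hω.2; rw [hb] at this; linarith
  -- s is a.e. equal to Ico a b
  have hs_ae : s =ᵐ[μ] Set.Ico a b := by
    have hIcc : ∀ᵐ ω ∂μ, ω ∈ Set.Icc (0:ℝ) 1 := by
      rw [hμ]; exact ae_restrict_mem measurableSet_Icc
    have hne1 : ∀ᵐ ω ∂μ, ω ≠ 1 := by
      rw [ae_iff]
      have : {ω : ℝ | ¬ ω ≠ 1} = {(1:ℝ)} := by ext ω; simp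
      rw [this, hμ, Measure.restrict_apply' measurableSet_Icc]
      refine le_antisymm (le_trans (measure_mono Set.inter_subset_left) ?_) zero_le
      simp
    rw [Filter.eventuallyEq_set]
    filter_upwards [hIcc, hne1] with ω hω hωne
    have hω01 : ω ∈ Set.Ico (0:ℝ) 1 := ⟨hω.1, lt_of_le_of_ne hω.2 hωne⟩
    constructor
    · intro hωs
      have : ω ∈ {ω | X p ω = x} ∩ Set.Ico (0:ℝ) 1 := ⟨hωs, hω01⟩
      rw [key p ⟨hp0, hp1⟩ x] at this
      exact this
    · intro hωab
      have : ω ∈ {ω | X p ω = x} ∩ Set.Ico (0:ℝ) 1 := by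
        rw [key p ⟨hp0, hp1⟩ x]; exact hωab
      exact this.1
  have hba : b - a = p * (1-p)^x := by rw [ha, hb]; ring
  have hba0 : 0 < p * (1-p)^x := mul_pos hp0 (pow_pos hr0 _)
  have hμs : μ s = ENNReal.ofReal (p * (1-p)^x) := by
    rw [measure_congr hs_ae, hμ, Measure.restrict_apply' measurableSet_Icc,
      Set.inter_eq_left.mpr (hab01.trans Set.Ico_subset_Icc_self), Real.volume_Ico, hba]
  -- the derivative fact
  have hgder : HasDerivAt (fun ε : ℝ => (1 - p - ε)^x) (-(x * (1-p)^(x-1))) 0 := by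
    have h1 : HasDerivAt (fun ε : ℝ => 1 - p - ε) (-1) 0 := by
      simpa using (hasDerivAt_id (0:ℝ)).const_sub (1-p)
    have := h1.pow x
    exact this.congr_deriv (by simp)
  have hslope : Tendsto (slope (fun ε : ℝ => (1 - p - ε)^x) 0) (𝓝[>] (0:ℝ))
      (𝓝 (-(x * (1-p)^(x-1)))) :=
    (hasDerivAt_iff_tendsto_slope.mp hgder).mono_left
      (nhdsWithin_mono 0 (fun y hy => ne_of_gt hy))
  have hlim : Tendsto (fun ε : ℝ => -(slope (fun ε : ℝ => (1 - p - ε)^x) 0 ε) / (p * (1-p)^x))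
      (𝓝[>] (0:ℝ)) (𝓝 ((x : ℝ) / (p * (1 - p)))) := by
    have := (hslope.neg).div_const (p * (1-p)^x)
    have heq : (x : ℝ) * (1-p)^(x-1) / (p * (1-p)^x) = (x : ℝ) / (p * (1 - p)) := by
      have hpow : (1-p)^x = (1-p)^(x-1) * (1-p) := by
        rw [← pow_succ, Nat.sub_add_cancel hx]
      rw [hpow]
      have hc : (1-p)^(x-1) ≠ 0 := ne_of_gt (pow_pos hr0 _)
      field_simp
    rw [neg_neg] at this
    rw [heq] at this
    exact this
  refine hlim.congr' ?_
  -- eventual equality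
  have ev1 : ∀ᶠ ε : ℝ in 𝓝[>] 0, ε < 1 - p :=
    eventually_nhdsWithin_of_eventually_nhds (eventually_lt_nhds hr0)
  have ev2 : ∀ᶠ ε : ℝ in 𝓝[>] 0, (1-p)^x < (1 - p - ε)^(x-1) := by
    have hc : Tendsto (fun ε : ℝ => (1 - p - ε)^(x-1)) (𝓝 0) (𝓝 ((1-p-0)^(x-1))) :=
      (Continuous.tendsto (by continuity) 0)
    have hlt : (1-p)^x < (1-p-0)^(x-1) := by
      rw [sub_zero]
      calc (1-p)^x = (1-p)^(x-1) * (1-p) := by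
            rw [← pow_succ, Nat.sub_add_cancel hx]
        _ < (1-p)^(x-1) := by
            nlinarith [pow_pos hr0 (x-1)]
    exact eventually_nhdsWithin_of_eventually_nhds (hc.eventually (eventually_gt_nhds hlt))
  have ev3 : ∀ᶠ ε : ℝ in 𝓝[>] 0, (1-p)^(x+1) < (1 - p - ε)^x := by
    have hc : Tendsto (fun ε : ℝ => (1 - p - ε)^x) (𝓝 0) (𝓝 ((1-p-0)^x)) :=
      (Continuous.tendsto (by continuity) 0)
    have hlt : (1-p)^(x+1) < (1-p-0)^x := by
      rw [sub_zero, pow_succ]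
      nlinarith [pow_pos hr0 x]
    exact eventually_nhdsWithin_of_eventually_nhds (hc.eventually (eventually_gt_nhds hlt))
  filter_upwards [ev1, ev2, ev3, self_mem_nhdsWithin] with ε h1 h2 h3 hε
  rw [Set.mem_Ioi] at hε
  -- names for the perturbed interval
  have hq : p + ε ∈ Set.Ioo (0:ℝ) 1 := ⟨by linarith, by linarith⟩
  have hqe : 1 - (p + ε) = 1 - p - ε := by ring
  have hkey' : {ω | X (p+ε) ω = x - 1} ∩ Set.Ico (0:ℝ) 1
      = Set.Ico (1 - (1-p-ε)^(x-1)) (1 - (1-p-ε)^x) := by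
    have := key (p+ε) hq (x-1)
    rw [hqe, Nat.sub_add_cancel hx] at this
    exact this
  set t := {ω | X (p+ε) ω = x - 1} with ht
  have htab : t ∩ Set.Ico a b = Set.Ico a (1 - (1-p-ε)^x) := by
    have hsub : Set.Ico a b ⊆ Set.Ico (0:ℝ) 1 := hab01
    have : t ∩ Set.Ico a b = (t ∩ Set.Ico (0:ℝ) 1) ∩ Set.Ico a b := by
      rw [Set.inter_assoc, Set.inter_eq_right.mpr hsub]
    rw [this, hkey', Set.Ico_inter_Ico,
      max_eq_right (by simp only [ha]; linarith),
      min_eq_left (by simp only [hb]; linarith)]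
  -- compute the conditional measure
  have hcond : (μ[|s]) t = ENNReal.ofReal (p * (1-p)^x)⁻¹
      * ENNReal.ofReal ((1-p)^x - (1-p-ε)^x) := by
    rw [ProbabilityTheory.cond, Measure.smul_apply, smul_eq_mul, hμs,
      Measure.restrict_congr_set hs_ae, Measure.restrict_apply' measurableSet_Ico, htab,
      hμ, Measure.restrict_apply' measurableSet_Icc,
      Set.inter_eq_left.mpr ((Set.Ico_subset_Ico_right (by rw [hb]; linarith)).trans
        (hab01.trans Set.Ico_subset_Icc_self)),
      Real.volume_Ico, ENNReal.ofReal_inv_of_pos hba0, ha]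
    congr 1
    ring_nf
  have hdiff0 : 0 ≤ (1-p)^x - (1-p-ε)^x := by
    have : (1-p-ε)^x ≤ (1-p)^x := pow_le_pow_left₀ (by linarith) (by linarith) x
    linarith
  rw [hcond, ENNReal.toReal_mul, ENNReal.toReal_ofReal hdiff0,
    ENNReal.toReal_ofReal (by positivity)]
  rw [slope_def_field]
  field_simp
  ring

end
end

section
/- Right jump rate of an inversion-parameterized Poisson variable: fix p > 0 and on Ω = [0,1] with the uniform measure define X(q)(ω) to be the unique nonnegative integer x with F_q(x−1) ≤ ω < F_q(x), where F_q is the cumulative distribution function of the Poisson distribution with rate q, so that X(q) ~ Pois(q). Then for every nonnegative integer x, lim_{ε→0⁺} P(X(p+ε) = x+1 | X(p) = x)/ε = 1. -/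
open MeasureTheory Filter Topology ProbabilityTheory Set

noncomputable section

/-- `poissonCDF q x = F_q(x-1) = Σ_{k<x} e^{-q} q^k / k!`, the probability that a Poisson
random variable with rate `q` is `< x` (so `poissonCDF q 0 = F_q(-1) = 0`). -/
def poissonCDF (q : ℝ) (x : ℕ) : ℝ :=
  ∑ k ∈ Finset.range x, Real.exp (-q) * q ^ k / (Nat.factorial k)

lemma pcdf_succ (q : ℝ) (n : ℕ) :
    poissonCDF q (n + 1) = poissonCDF q n + Real.exp (-q) * q ^ n / n.factorial :=
  Finset.sum_range_succ _ n

lemma pcdf_nonneg {q : ℝ} (hq : 0 ≤ q) (n : ℕ) : 0 ≤ poissonCDF q n :=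
  Finset.sum_nonneg fun k _ => by positivity

lemma pcdf_lt_succ {q : ℝ} (hq : 0 < q) (n : ℕ) : poissonCDF q n < poissonCDF q (n + 1) := by
  rw [pcdf_succ]
  have : 0 < Real.exp (-q) * q ^ n / n.factorial := by positivity
  linarith

lemma pcdf_mono {q : ℝ} (hq : 0 < q) : Monotone (poissonCDF q) :=
  monotone_nat_of_le_succ fun n => (pcdf_lt_succ hq n).le

lemma pcdf_le_one {q : ℝ} (hq : 0 ≤ q) (n : ℕ) : poissonCDF q n ≤ 1 := by
  have h : poissonCDF q n = Real.exp (-q) * ∑ k ∈ Finset.range n, q ^ k / k.factorial := by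
    rw [Finset.mul_sum, poissonCDF]; congr 1 with k; ring
  rw [h]
  calc Real.exp (-q) * ∑ k ∈ Finset.range n, q ^ k / k.factorial
      ≤ Real.exp (-q) * Real.exp q :=
        mul_le_mul_of_nonneg_left (Real.sum_le_exp_of_nonneg hq n) (Real.exp_nonneg _)
    _ = 1 := by rw [← Real.exp_add]; simp

lemma term_hasDerivAt (n : ℕ) (q : ℝ) :
    HasDerivAt (fun q : ℝ => Real.exp (-q) * q ^ n / n.factorial)
      ((Real.exp (-q) * (n * q ^ (n - 1)) - Real.exp (-q) * q ^ n) / n.factorial) q := by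
  have he : HasDerivAt (fun q : ℝ => Real.exp (-q)) (-Real.exp (-q)) q := by
    exact ((Real.hasDerivAt_exp (-q)).comp q (hasDerivAt_neg q)).congr_deriv (by simp)
  have := (he.mul (hasDerivAt_pow n q)).div_const (n.factorial : ℝ)
  refine this.congr_deriv ?_
  ring

lemma pcdf_hasDerivAt (n : ℕ) (q : ℝ) :
    HasDerivAt (fun q : ℝ => poissonCDF q (n + 1))
      (-(Real.exp (-q) * q ^ n / n.factorial)) q := by
  induction n with
  | zero =>
      have h := term_hasDerivAt 0 q
      have hfun : (fun q : ℝ => poissonCDF q 1)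
          = fun q : ℝ => Real.exp (-q) * q ^ 0 / (Nat.factorial 0) := by
        funext q; simp [poissonCDF]
      rw [hfun]
      convert h using 1
      simp
  | succ n ih =>
      have h := ih.add (term_hasDerivAt (n + 1) q)
      have hfun : (fun q : ℝ => poissonCDF q (n + 1 + 1))
          = fun q : ℝ => poissonCDF q (n + 1) + Real.exp (-q) * q ^ (n + 1) / (n + 1).factorial := by
        funext q; rw [pcdf_succ]
      rw [hfun]
      refine h.congr_deriv ?_
      have hne : ((n.factorial : ℝ)) ≠ 0 := Nat.cast_ne_zero.mpr n.factorial_ne_zero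
      have hne1 : ((n + 1 : ℕ) : ℝ) ≠ 0 := by positivity
      rw [Nat.factorial_succ]
      push_cast
      field_simp
      ring

lemma pcdf_continuous (n : ℕ) : Continuous fun q : ℝ => poissonCDF q n := by
  unfold poissonCDF
  exact continuous_finset_sum _ fun k _ => by fun_prop

/-- **Right jump rate of an inversion-parameterized Poisson variable.**  Fix `p > 0` and on
`Ω = [0,1]` with the uniform measure define `X q ω` to be the unique nonnegative integer
`x` with `F_q(x-1) ≤ ω < F_q(x)`, where `F_q` is the cumulative distribution function of the
Poisson distribution with rate `q`, so that `X q ∼ Pois(q)`.  Then for every nonnegative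
integer `x`, `lim_{ε→0⁺} P(X (p+ε) = x + 1 | X p = x)/ε = 1`. -/
theorem poisson_right_jump_rate
    (p : ℝ) (hp : 0 < p)
    (μ : Measure ℝ) (hμ : μ = volume.restrict (Set.Icc (0 : ℝ) 1))
    (X : ℝ → ℝ → ℕ)
    (hX : ∀ q : ℝ, 0 < q → ∀ ω ∈ Set.Ico (0 : ℝ) 1,
      poissonCDF q (X q ω) ≤ ω ∧ ω < poissonCDF q (X q ω + 1))
    (x : ℕ) :
    Tendsto
      (fun ε : ℝ => ((μ[|{ω | X p ω = x}]) {ω | X (p + ε) ω = x + 1}).toReal / ε)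
      (𝓝[>] (0 : ℝ)) (𝓝 (1 : ℝ)) := by
  -- notation
  set a : ℝ := poissonCDF p x with ha_def
  set b : ℝ := poissonCDF p (x + 1) with hb_def
  have hab : a < b := pcdf_lt_succ hp x
  have hDpos : 0 < b - a := sub_pos.mpr hab
  -- the event sets coincide with intervals on [0,1)
  have hset : ∀ q : ℝ, 0 < q → ∀ y : ℕ,
      {ω : ℝ | X q ω = y} ∩ Set.Ico (0 : ℝ) 1 = Set.Ico (poissonCDF q y) (poissonCDF q (y + 1)) := by
    intro q hq y
    ext ω
    constructor
    · rintro ⟨hXy, hω⟩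
      obtain ⟨h1, h2⟩ := hX q hq ω hω
      simp only [Set.mem_setOf_eq] at hXy
      rw [hXy] at h1 h2
      exact ⟨h1, h2⟩
    · rintro ⟨h1, h2⟩
      have hω : ω ∈ Set.Ico (0 : ℝ) 1 :=
        ⟨le_trans (pcdf_nonneg hq.le y) h1, lt_of_lt_of_le h2 (pcdf_le_one hq.le (y + 1))⟩
      obtain ⟨g1, g2⟩ := hX q hq ω hω
      refine ⟨?_, hω⟩
      simp only [Set.mem_setOf_eq]
      by_contra hne
      rcases lt_or_gt_of_ne hne with hlt | hgt
      · have : poissonCDF q (X q ω + 1) ≤ poissonCDF q y := pcdf_mono hq (by omega)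
        linarith
      · have : poissonCDF q (y + 1) ≤ poissonCDF q (X q ω) := pcdf_mono hq (by omega)
        linarith
  -- the complement of [0,1) is μ-null
  have hnull : μ ((Set.Ico (0 : ℝ) 1)ᶜ) = 0 := by
    rw [hμ, Measure.restrict_apply' measurableSet_Icc]
    refine measure_mono_null ?_ (measure_singleton (1 : ℝ))
    rintro ω ⟨hc, h0, h1⟩
    simp only [Set.mem_compl_iff, Set.mem_Ico, not_and, not_lt] at hc
    exact le_antisymm h1 (hc h0)
  have hae : ∀ᵐ ω ∂μ, ω ∈ Set.Ico (0 : ℝ) 1 := MeasureTheory.mem_ae_iff.mpr hnull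
  have haeq : ∀ q : ℝ, 0 < q → ∀ y : ℕ,
      {ω : ℝ | X q ω = y} =ᵐ[μ] Set.Ico (poissonCDF q y) (poissonCDF q (y + 1)) := by
    intro q hq y
    rw [eventuallyEq_set]
    filter_upwards [hae] with ω hω
    constructor
    · intro h
      have hm : ω ∈ {ω : ℝ | X q ω = y} ∩ Set.Ico (0 : ℝ) 1 := Set.mem_inter h hω
      rw [hset q hq y] at hm
      exact hm
    · intro h
      have hm : ω ∈ {ω : ℝ | X q ω = y} ∩ Set.Ico (0 : ℝ) 1 := by
        rw [hset q hq y]; exact h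
      exact hm.1
  -- measure of subintervals of [0,1]
  have hmeas : ∀ u v : ℝ, 0 ≤ u → v ≤ 1 → μ (Set.Ico u v) = ENNReal.ofReal (v - u) := by
    intro u v hu hv
    have hsub : Set.Ico u v ⊆ Set.Icc (0 : ℝ) 1 := fun ω hω =>
      Set.mem_Icc.mpr ⟨le_trans hu hω.1, le_trans hω.2.le hv⟩
    rw [hμ, Measure.restrict_apply' measurableSet_Icc, Set.inter_eq_left.mpr hsub,
      Real.volume_Ico]
  have hμA : μ {ω : ℝ | X p ω = x} = ENNReal.ofReal (b - a) := by
    rw [measure_congr (haeq p hp x)]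
    exact hmeas a b (pcdf_nonneg hp.le x) (pcdf_le_one hp.le (x + 1))
  -- conditional measure through the interval
  have hcond : μ[|{ω : ℝ | X p ω = x}] = (ENNReal.ofReal (b - a))⁻¹ • μ.restrict (Set.Ico a b) := by
    show (μ {ω : ℝ | X p ω = x})⁻¹ • μ.restrict {ω : ℝ | X p ω = x} = _
    rw [hμA, Measure.restrict_congr_set (haeq p hp x)]
  -- strict antitonicity of q ↦ F_q(x+1) on [p, ∞)
  have hD := pcdf_hasDerivAt x
  have hanti : StrictAntiOn (fun q : ℝ => poissonCDF q (x + 1)) (Set.Ici p) := by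
    refine strictAntiOn_of_deriv_neg (convex_Ici p) (pcdf_continuous (x + 1)).continuousOn ?_
    intro q hq
    rw [interior_Ici] at hq
    rw [(hD q).deriv]
    have hq0 : 0 < q := lt_trans hp hq
    have : 0 < Real.exp (-q) * q ^ x / x.factorial := by positivity
    linarith
  -- continuity in ε of the endpoints
  have hc_cont : ContinuousAt (fun ε : ℝ => poissonCDF (p + ε) (x + 1)) 0 :=
    ((pcdf_continuous (x + 1)).comp (continuous_const.add continuous_id)).continuousAt
  have hd_cont : ContinuousAt (fun ε : ℝ => poissonCDF (p + ε) (x + 2)) 0 :=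
    ((pcdf_continuous (x + 2)).comp (continuous_const.add continuous_id)).continuousAt
  have hc0 : poissonCDF (p + 0) (x + 1) = b := by rw [add_zero]
  have hd0 : b < poissonCDF (p + 0) (x + 2) := by rw [add_zero]; exact pcdf_lt_succ hp (x + 1)
  have hc_tend : Tendsto (fun ε : ℝ => poissonCDF (p + ε) (x + 1)) (𝓝 0) (𝓝 b) := by
    have := hc_cont.tendsto
    rwa [hc0] at this
  have hd_tend : Tendsto (fun ε : ℝ => poissonCDF (p + ε) (x + 2)) (𝓝 0) (𝓝 (poissonCDF (p + 0) (x + 2))) :=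
    hd_cont.tendsto
  -- eventual facts on 𝓝[>] 0
  have hev1 : ∀ᶠ ε in 𝓝[>] (0 : ℝ), a < poissonCDF (p + ε) (x + 1) :=
    ((hc_tend.eventually (eventually_gt_nhds hab)).filter_mono nhdsWithin_le_nhds)
  have hev2 : ∀ᶠ ε in 𝓝[>] (0 : ℝ), b ≤ poissonCDF (p + ε) (x + 2) :=
    (((hd_tend.eventually (eventually_gt_nhds hd0)).mono fun ε h => h.le).filter_mono
      nhdsWithin_le_nhds)
  have hev0 : ∀ᶠ ε in 𝓝[>] (0 : ℝ), 0 < ε := eventually_mem_nhdsWithin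
  -- the key eventual formula
  have hkey : ∀ᶠ ε in 𝓝[>] (0 : ℝ),
      ((μ[|{ω : ℝ | X p ω = x}]) {ω : ℝ | X (p + ε) ω = x + 1}).toReal / ε
        = (b - poissonCDF (p + ε) (x + 1)) / ε * (b - a)⁻¹ := by
    filter_upwards [hev0, hev1, hev2] with ε hε h1 h2
    set c : ℝ := poissonCDF (p + ε) (x + 1) with hc_def
    set d : ℝ := poissonCDF (p + ε) (x + 2) with hd_def
    have hpε : (0 : ℝ) < p + ε := by linarith
    have hcb : c < b := hanti (Set.self_mem_Ici) (by simp [Set.mem_Ici]; linarith) (by linarith)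
    -- compute the conditional measure
    have hBeq : {ω : ℝ | X (p + ε) ω = x + 1} =ᵐ[μ] Set.Ico c d := haeq (p + ε) hpε (x + 1)
    have hinter : μ (Set.Ico a b ∩ {ω : ℝ | X (p + ε) ω = x + 1}) = ENNReal.ofReal (b - c) := by
      have h3 : (Set.Ico a b ∩ {ω : ℝ | X (p + ε) ω = x + 1} : Set ℝ)
          =ᵐ[μ] (Set.Ico a b ∩ Set.Ico c d : Set ℝ) :=
        MeasureTheory.ae_eq_set_inter (Filter.EventuallyEq.refl _ _) hBeq
      rw [measure_congr h3, Set.Ico_inter_Ico, max_eq_right h1.le, min_eq_left h2]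
      exact hmeas c b (pcdf_nonneg hpε.le (x + 1)) (pcdf_le_one hp.le (x + 1))
    have hval : (μ[|{ω : ℝ | X p ω = x}]) {ω : ℝ | X (p + ε) ω = x + 1}
        = (ENNReal.ofReal (b - a))⁻¹ * ENNReal.ofReal (b - c) := by
      rw [hcond]
      simp only [Measure.smul_apply, smul_eq_mul]
      rw [Measure.restrict_apply' measurableSet_Ico, Set.inter_comm, hinter]
    rw [hval, ENNReal.toReal_mul, ENNReal.toReal_inv, ENNReal.toReal_ofReal hDpos.le,
      ENNReal.toReal_ofReal (by linarith : (0:ℝ) ≤ b - c)]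
    ring
  -- the limit via the derivative
  have hslope : Tendsto (fun ε : ℝ => (poissonCDF (p + ε) (x + 1) - b) / ε)
      (𝓝[>] (0 : ℝ)) (𝓝 (-(b - a))) := by
    have hDb : b - a = Real.exp (-p) * p ^ x / x.factorial := by
      rw [hb_def, pcdf_succ]; ring
    have hder : HasDerivAt (fun q : ℝ => poissonCDF q (x + 1)) (-(b - a)) p := by
      rw [hDb]; exact hD p
    have hs := hasDerivAt_iff_tendsto_slope.mp hder
    have hmap : Tendsto (fun ε : ℝ => p + ε) (𝓝[>] (0 : ℝ)) (𝓝[≠] p) := by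
      rw [tendsto_nhdsWithin_iff]
      constructor
      · have : Tendsto (fun ε : ℝ => p + ε) (𝓝 0) (𝓝 (p + 0)) :=
          (continuous_const.add continuous_id).continuousAt
        rw [add_zero] at this
        exact this.mono_left nhdsWithin_le_nhds
      · filter_upwards [eventually_mem_nhdsWithin] with ε (hε : 0 < ε)
        simp only [Set.mem_compl_iff, Set.mem_singleton_iff]
        intro h; linarith [congrArg (fun t => t - p) h]
    have := hs.comp hmap
    refine this.congr fun ε => ?_
    simp only [Function.comp_apply, slope_def_field]
    rw [add_sub_cancel_left]
  have hlim : Tendsto (fun ε : ℝ => (b - poissonCDF (p + ε) (x + 1)) / ε * (b - a)⁻¹)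
      (𝓝[>] (0 : ℝ)) (𝓝 (1 : ℝ)) := by
    have h1 : Tendsto (fun ε : ℝ => (b - poissonCDF (p + ε) (x + 1)) / ε)
        (𝓝[>] (0 : ℝ)) (𝓝 (b - a)) := by
      have := hslope.neg
      rw [neg_neg] at this
      refine this.congr fun ε => ?_
      rw [← neg_div, neg_sub]
    have := h1.mul_const (b - a)⁻¹
    rwa [mul_inv_cancel₀ hDpos.ne'] at this
  exact Tendsto.congr' (hkey.mono fun ε h => h.symm) hlim

end
end

section
/- Right jump rate of an inversion-parameterized Binomial variable: fix an integer n ≥ 1 and p ∈ (0,1), and on Ω = [0,1] with the uniform measure define X(q)(ω) to be the unique integer x ∈ {0,…,n} with F_q(x−1) ≤ ω < F_q(x), where F_q is the cumulative distribution function of Bin(n,q), so that X(q) ~ Bin(n,q). Then for every integer x with 0 ≤ x < n, lim_{ε→0⁺} P(X(p+ε) = x+1 | X(p) = x)/ε = (n−x)/(1−p). -/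
open MeasureTheory Filter Topology ProbabilityTheory Set

noncomputable section

/-- `binomialCDF n q x = F_q(x-1) = Σ_{k<x} C(n,k) q^k (1-q)^(n-k)`, the probability that a
`Bin(n,q)` random variable is `< x` (so `binomialCDF n q 0 = F_q(-1) = 0`). -/
def binomialCDF (n : ℕ) (q : ℝ) (x : ℕ) : ℝ :=
  ∑ k ∈ Finset.range x, (n.choose k : ℝ) * q ^ k * (1 - q) ^ (n - k)

lemma binomialCDF_succ (n : ℕ) (q : ℝ) (k : ℕ) :
    binomialCDF n q (k+1) = binomialCDF n q k + (n.choose k : ℝ) * q ^ k * (1-q) ^ (n-k) := by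
  simp [binomialCDF, Finset.sum_range_succ]

lemma binomialCDF_zero (n : ℕ) (q : ℝ) : binomialCDF n q 0 = 0 := by simp [binomialCDF]

lemma binomialCDF_nonneg {q : ℝ} (hq0 : 0 ≤ q) (hq1 : q ≤ 1) (n x : ℕ) :
    0 ≤ binomialCDF n q x :=
  Finset.sum_nonneg fun k _ => by
    have : (0:ℝ) ≤ 1 - q := by linarith
    positivity

lemma binomialCDF_mono {q : ℝ} (hq0 : 0 ≤ q) (hq1 : q ≤ 1) (n : ℕ) :
    Monotone (binomialCDF n q) :=
  monotone_nat_of_le_succ fun k => by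
    rw [binomialCDF_succ]
    have : (0:ℝ) ≤ 1 - q := by linarith
    have : (0:ℝ) ≤ (n.choose k : ℝ) * q ^ k * (1-q) ^ (n-k) := by positivity
    linarith

lemma binomialCDF_total (n : ℕ) (q : ℝ) : binomialCDF n q (n+1) = 1 := by
  have h := add_pow q (1-q) n
  simp only [add_sub_cancel, one_pow] at h
  rw [binomialCDF]
  conv_rhs => rw [h]
  exact Finset.sum_congr rfl fun k _ => by ring

lemma binomialCDF_step_pos {q : ℝ} (hq : q ∈ Set.Ioo (0:ℝ) 1) {n k : ℕ} (hk : k ≤ n) :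
    binomialCDF n q k < binomialCDF n q (k+1) := by
  rw [binomialCDF_succ]
  have h1 : (0:ℝ) < 1 - q := by linarith [hq.2]
  have h2 : (0:ℝ) < q := hq.1
  have h3 : 0 < n.choose k := Nat.choose_pos hk
  have : (0:ℝ) < (n.choose k : ℝ) * q ^ k * (1-q) ^ (n-k) := by positivity
  linarith

lemma binomialCDF_lt_one {q : ℝ} (hq : q ∈ Set.Ioo (0:ℝ) 1) {n k : ℕ} (hk : k ≤ n) :
    binomialCDF n q k < 1 := by
  calc binomialCDF n q k ≤ binomialCDF n q n :=
        binomialCDF_mono (le_of_lt hq.1) (le_of_lt hq.2) n hk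
    _ < binomialCDF n q (n+1) := binomialCDF_step_pos hq le_rfl
    _ = 1 := binomialCDF_total n q

lemma binomialCDF_le_one {q : ℝ} (hq0 : 0 ≤ q) (hq1 : q ≤ 1) (n k : ℕ) (hk : k ≤ n + 1) :
    binomialCDF n q k ≤ 1 := by
  calc binomialCDF n q k ≤ binomialCDF n q (n+1) := binomialCDF_mono hq0 hq1 n hk
    _ = 1 := binomialCDF_total n q

lemma binomialCDF_continuous (n x : ℕ) : Continuous fun q : ℝ => binomialCDF n q x := by
  unfold binomialCDF
  exact continuous_finset_sum _ fun k _ => by fun_prop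


lemma binomialCDF_hasDerivAt (n : ℕ) : ∀ x, x < n → ∀ q : ℝ,
    HasDerivAt (fun q => binomialCDF n q (x+1))
      (-(((n:ℝ) - x) * n.choose x * q ^ x * (1-q) ^ (n - x - 1))) q := by
  intro x
  induction x with
  | zero =>
    intro _ q
    have hfun : (fun q : ℝ => binomialCDF n q 1) = fun q : ℝ => (1-q)^n := by
      funext q; simp [binomialCDF]
    rw [hfun]
    have h1 : HasDerivAt (fun q : ℝ => (1-q)^n) (↑n * (1-q)^(n-1) * (-1)) q :=
      ((hasDerivAt_id q).const_sub 1).pow n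
    convert h1 using 1
    simp
  | succ x ih =>
    intro hx q
    have hx' : x < n := Nat.lt_of_succ_lt hx
    have hfun : (fun q : ℝ => binomialCDF n q (x+2)) =
        fun q : ℝ => binomialCDF n q (x+1) +
          (n.choose (x+1) : ℝ) * (q^(x+1) * (1-q)^(n-(x+1))) := by
      funext q; rw [binomialCDF_succ]; ring
    rw [hfun]
    have hterm : HasDerivAt (fun q : ℝ => q^(x+1) * (1-q)^(n-(x+1)))
        ((↑(x+1) * q^x) * (1-q)^(n-(x+1)) +
          q^(x+1) * (↑(n-(x+1)) * (1-q)^(n-(x+1)-1) * (-1))) q := by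
      have h1 : HasDerivAt (fun q : ℝ => q^(x+1)) (↑(x+1) * q^x) q := by
        simpa using hasDerivAt_pow (x+1) q
      have h2 : HasDerivAt (fun q : ℝ => (1-q)^(n-(x+1)))
          (↑(n-(x+1)) * (1-q)^(n-(x+1)-1) * (-1)) q :=
        ((hasDerivAt_id q).const_sub 1).pow _
      exact h1.mul h2
    have hsum := (ih hx' q).add (hterm.const_mul ((n.choose (x+1) : ℝ)))
    convert hsum using 1
    · rfl
    · rfl
    · rfl
    have hch : ((n.choose (x+1) : ℝ)) * ((x:ℝ)+1) = (n.choose x : ℝ) * ((n:ℝ) - x) := by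
      have h := congrArg (fun m : ℕ => (m : ℝ)) (Nat.choose_succ_right_eq n x)
      push_cast [Nat.cast_sub hx'.le] at h
      linarith
    simp only [show n-(x+1) = n-x-1 from by omega, show n-(x+1)-1 = n-x-2 from by omega,
      show n-(x+1+1) = n-x-2 from by omega]
    have hm : ((n - x - 1 : ℕ) : ℝ) = (n:ℝ) - x - 1 := by
      have h1 : n - x - 1 = n - (x+1) := by omega
      rw [h1, Nat.cast_sub (by omega : x+1 ≤ n)]
      push_cast; ring
    rw [hm]
    have hpow : (1-q)^(n - x - 1) = (1-q)^(n-x-2) * (1-q) := by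
      rw [← pow_succ]; congr 1; omega
    rw [hpow]
    push_cast
    linear_combination (-(q^x * (1-q)^(n-x-2) * (1-q))) * hch

/-- **Right jump rate of an inversion-parameterized Binomial variable.**  Fix an integer
`n ≥ 1` and `p ∈ (0,1)`, and on `Ω = [0,1]` with the uniform measure define `X q ω` to be
the unique integer `x ∈ {0,…,n}` with `F_q(x-1) ≤ ω < F_q(x)`, where `F_q` is the cumulative
distribution function of `Bin(n,q)`, so that `X q ∼ Bin(n,q)`.  Then for every integer `x`
with `0 ≤ x < n`, `lim_{ε→0⁺} P(X (p+ε) = x + 1 | X p = x)/ε = (n-x)/(1-p)`. -/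
theorem binomial_right_jump_rate
    (n : ℕ) (hn : 1 ≤ n) (p : ℝ) (hp : p ∈ Set.Ioo (0 : ℝ) 1)
    (μ : Measure ℝ) (hμ : μ = volume.restrict (Set.Icc (0 : ℝ) 1))
    (X : ℝ → ℝ → ℕ)
    (hX : ∀ q ∈ Set.Ioo (0 : ℝ) 1, ∀ ω ∈ Set.Ico (0 : ℝ) 1,
      X q ω ≤ n ∧ binomialCDF n q (X q ω) ≤ ω ∧ ω < binomialCDF n q (X q ω + 1))
    (x : ℕ) (hx : x < n) :
    Tendsto
      (fun ε : ℝ => ((μ[|{ω | X p ω = x}]) {ω | X (p + ε) ω = x + 1}).toReal / ε)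
      (𝓝[>] (0 : ℝ)) (𝓝 (((n : ℝ) - x) / (1 - p))) := by
  obtain ⟨hp0, hp1⟩ := hp
  set l := 𝓝[>] (0:ℝ) with hl
  -- key characterization of X via intervals
  have key : ∀ q ∈ Set.Ioo (0:ℝ) 1, ∀ y, y ≤ n → ∀ ω ∈ Set.Ico (0:ℝ) 1,
      (X q ω = y ↔ ω ∈ Set.Ico (binomialCDF n q y) (binomialCDF n q (y+1))) := by
    intro q hq y hy ω hω
    obtain ⟨hz, hz1, hz2⟩ := hX q hq ω hω
    constructor
    · rintro rfl; exact ⟨hz1, hz2⟩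
    · rintro ⟨h1, h2⟩
      by_contra hne
      rcases lt_or_gt_of_ne hne with hlt | hgt
      · have hle : X q ω + 1 ≤ y := hlt
        have : binomialCDF n q (X q ω + 1) ≤ binomialCDF n q y :=
          binomialCDF_mono hq.1.le hq.2.le n hle
        linarith
      · have hle : y + 1 ≤ X q ω := hgt
        have : binomialCDF n q (y + 1) ≤ binomialCDF n q (X q ω) :=
          binomialCDF_mono hq.1.le hq.2.le n hle
        linarith
  have hppos : p ∈ Set.Ioo (0:ℝ) 1 := ⟨hp0, hp1⟩
  have hFx0 : 0 ≤ binomialCDF n p x := binomialCDF_nonneg hp0.le hp1.le n x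
  have hF1lt1 : binomialCDF n p (x+1) < 1 := binomialCDF_lt_one hppos (by omega)
  have hstep : binomialCDF n p x < binomialCDF n p (x+1) := binomialCDF_step_pos hppos hx.le
  have hstep1 : binomialCDF n p (x+1) < binomialCDF n p (x+2) := binomialCDF_step_pos hppos (by omega)
  have hI1 : Set.Ico (binomialCDF n p x) (binomialCDF n p (x+1)) ⊆ Set.Ico (0:ℝ) 1 := by
    intro ω hω
    exact ⟨le_trans hFx0 hω.1, lt_trans hω.2 hF1lt1⟩
  -- a.e. identification of the conditioning event
  have hAI : {ω | X p ω = x} =ᵐ[μ] Set.Ico (binomialCDF n p x) (binomialCDF n p (x+1)) := by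
    rw [hμ]
    have h1 : ∀ᵐ ω ∂(volume.restrict (Set.Icc (0:ℝ) 1)), ω ∈ Set.Icc (0:ℝ) 1 :=
      ae_restrict_mem measurableSet_Icc
    have h2 : ∀ᵐ ω ∂(volume.restrict (Set.Icc (0:ℝ) 1)), ω ≠ 1 := by
      refine ae_iff.mpr ?_
      have hs : {ω : ℝ | ¬ ω ≠ 1} = {1} := by ext ω; simp
      rw [hs, Measure.restrict_apply' measurableSet_Icc]
      exact measure_mono_null Set.inter_subset_left (measure_singleton 1)
    rw [Filter.eventuallyEq_set]
    filter_upwards [h1, h2] with ω hωIcc hω1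
    have hω : ω ∈ Set.Ico (0:ℝ) 1 := ⟨hωIcc.1, lt_of_le_of_ne hωIcc.2 hω1⟩
    exact key p hppos x hx.le ω hω
  have hcond : μ[|{ω | X p ω = x}]
      = μ[|Set.Ico (binomialCDF n p x) (binomialCDF n p (x+1))] := by
    unfold ProbabilityTheory.cond
    rw [measure_congr hAI, Measure.restrict_congr_set hAI]
  have hμIco : ∀ a b : ℝ, Set.Ico a b ⊆ Set.Icc 0 1 →
      μ (Set.Ico a b) = ENNReal.ofReal (b - a) := by
    intro a b hsub
    rw [hμ, Measure.restrict_apply' measurableSet_Icc, Set.inter_eq_left.mpr hsub,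
      Real.volume_Ico]
  -- convergence infrastructure
  have h_eps_pos : ∀ᶠ ε in l, (0:ℝ) < ε := eventually_mem_nhdsWithin
  have hadd : Tendsto (fun ε : ℝ => p + ε) l (𝓝 p) := by
    have h : Tendsto (fun ε : ℝ => p + ε) (𝓝 0) (𝓝 (p + 0)) :=
      tendsto_const_nhds.add tendsto_id
    rw [add_zero] at h
    exact h.mono_left nhdsWithin_le_nhds
  have hcont : ∀ y : ℕ, Tendsto (fun ε : ℝ => binomialCDF n (p+ε) y) l
      (𝓝 (binomialCDF n p y)) :=
    fun y => ((binomialCDF_continuous n y).tendsto p).comp hadd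
  have h_lt1 : ∀ᶠ ε in l, p + ε < 1 := hadd.eventually (eventually_lt_nhds hp1)
  have hc2 : ∀ᶠ ε in l, binomialCDF n p x < binomialCDF n (p+ε) (x+1) :=
    (hcont (x+1)).eventually (eventually_gt_nhds hstep)
  have hc3 : ∀ᶠ ε in l, binomialCDF n p (x+1) < binomialCDF n (p+ε) (x+2) :=
    (hcont (x+2)).eventually (eventually_gt_nhds hstep1)
  -- derivative / slope
  set D : ℝ := ((n:ℝ) - x) * n.choose x * p ^ x * (1-p) ^ (n - x - 1) with hDdef
  have hDpos : 0 < D := by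
    have h1 : (0:ℝ) < (n:ℝ) - x := by
      have : (x:ℝ) < n := by exact_mod_cast hx
      linarith
    have h2 : (0:ℝ) < (n.choose x : ℝ) := by exact_mod_cast Nat.choose_pos hx.le
    have h3 : (0:ℝ) < 1 - p := by linarith
    positivity
  have hD : HasDerivAt (fun q => binomialCDF n q (x+1)) (-D) p := binomialCDF_hasDerivAt n x hx p
  have hmap : Tendsto (fun ε : ℝ => p + ε) l (𝓝[≠] p) := by
    rw [tendsto_nhdsWithin_iff]
    refine ⟨hadd, ?_⟩
    filter_upwards [h_eps_pos] with ε hε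
    simp only [Set.mem_compl_iff, Set.mem_singleton_iff]
    intro h; linarith [congrArg id h]
  have hslope : Tendsto (fun ε : ℝ => (binomialCDF n (p+ε) (x+1) - binomialCDF n p (x+1)) / ε)
      l (𝓝 (-D)) := by
    have h := (hasDerivAt_iff_tendsto_slope.mp hD).comp hmap
    refine h.congr fun ε => ?_
    simp only [Function.comp_apply, slope_def_field]
    rw [add_sub_cancel_left]
  have hslope' : Tendsto (fun ε : ℝ => (binomialCDF n p (x+1) - binomialCDF n (p+ε) (x+1)) / ε)
      l (𝓝 D) := by
    have h := hslope.neg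
    rw [neg_neg] at h
    refine h.congr fun ε => ?_
    rw [← neg_div, neg_sub]
  have hc4 : ∀ᶠ ε in l, binomialCDF n (p+ε) (x+1) < binomialCDF n p (x+1) := by
    have hneg : ∀ᶠ ε in l,
        (binomialCDF n (p+ε) (x+1) - binomialCDF n p (x+1)) / ε < 0 :=
      hslope.eventually (eventually_lt_nhds (by linarith))
    filter_upwards [hneg, h_eps_pos] with ε h hε
    rcases div_neg_iff.mp h with ⟨_, h2⟩ | ⟨h1, _⟩
    · linarith
    · linarith
  -- eventual identification of the conditional probability
  have heq : (fun ε : ℝ => ((μ[|{ω | X p ω = x}]) {ω | X (p + ε) ω = x + 1}).toReal / ε)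
      =ᶠ[l] (fun ε : ℝ => (binomialCDF n p (x+1) - binomialCDF n (p+ε) (x+1)) / ε
            * (binomialCDF n p (x+1) - binomialCDF n p x)⁻¹) := by
    filter_upwards [h_eps_pos, h_lt1, hc2, hc3, hc4] with ε hε0 hε1 h2 h3 h4
    have hqε : p + ε ∈ Set.Ioo (0:ℝ) 1 := ⟨by linarith, hε1⟩
    have hIB : Set.Ico (binomialCDF n p x) (binomialCDF n p (x+1)) ∩ {ω | X (p+ε) ω = x+1}
        = Set.Ico (binomialCDF n (p+ε) (x+1)) (binomialCDF n p (x+1)) := by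
      ext ω
      constructor
      · rintro ⟨hωI, hωB⟩
        have hω01 : ω ∈ Set.Ico (0:ℝ) 1 := hI1 hωI
        have hm := (key (p+ε) hqε (x+1) (by omega) ω hω01).mp hωB
        exact ⟨hm.1, hωI.2⟩
      · rintro ⟨hlo, hhi⟩
        have hωI : ω ∈ Set.Ico (binomialCDF n p x) (binomialCDF n p (x+1)) :=
          ⟨le_trans h2.le hlo, hhi⟩
        have hω01 := hI1 hωI
        exact ⟨hωI, (key (p+ε) hqε (x+1) (by omega) ω hω01).mpr
          ⟨hlo, lt_of_lt_of_le hhi h3.le⟩⟩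
    have hsub2 : Set.Ico (binomialCDF n (p+ε) (x+1)) (binomialCDF n p (x+1))
        ⊆ Set.Icc (0:ℝ) 1 := by
      intro ω hω
      constructor
      · have : (0:ℝ) ≤ binomialCDF n (p+ε) (x+1) := by linarith
        linarith [hω.1]
      · linarith [hω.2]
    rw [hcond, ProbabilityTheory.cond_apply measurableSet_Ico, hIB,
      hμIco _ _ (Set.Subset.trans hI1 Set.Ico_subset_Icc_self),
      hμIco _ _ hsub2, ENNReal.toReal_mul, ENNReal.toReal_inv,
      ENNReal.toReal_ofReal (by linarith), ENNReal.toReal_ofReal (by linarith)]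
    ring
  -- conclusion
  have hlim : Tendsto
      (fun ε : ℝ => (binomialCDF n p (x+1) - binomialCDF n (p+ε) (x+1)) / ε
        * (binomialCDF n p (x+1) - binomialCDF n p x)⁻¹) l
      (𝓝 (D * (binomialCDF n p (x+1) - binomialCDF n p x)⁻¹)) :=
    hslope'.mul_const _
  have hval : ((n:ℝ) - x) / (1 - p)
      = D * (binomialCDF n p (x+1) - binomialCDF n p x)⁻¹ := by
    have hterm : binomialCDF n p (x+1) - binomialCDF n p x
        = (n.choose x : ℝ) * p^x * (1-p)^(n-x) := by
      rw [binomialCDF_succ]; ring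
    have hpow : (1-p)^(n-x) = (1-p)^(n-x-1) * (1-p) := by
      rw [← pow_succ]; congr 1; omega
    have h2 : (0:ℝ) < (n.choose x : ℝ) := by exact_mod_cast Nat.choose_pos hx.le
    have h3 : (0:ℝ) < 1 - p := by linarith
    rw [hterm, hpow, hDdef]
    field_simp
  rw [hval]
  exact hlim.congr' heq.symm

end
end

section
/- Cubic growth of the score-function estimator variance for a Binomial variable: fix p ∈ (0,1) and let X_n ~ Bin(n,p) for each integer n ≥ 1. Then there exists a constant C = C(p) such that for all n, |Var[X_n(X_n − np)/(p(1−p))] − n³·p/(1−p)| ≤ C·n². In particular the variance of the score-function estimator grows as n³·p/(1−p) + O(n²), cubically in n. -/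
open MeasureTheory Filter Topology ProbabilityTheory Set

noncomputable section


lemma binAux_mom {p q : ℝ} (hpq : p + q = 1) (k n : ℕ) :
    ∑ x ∈ Finset.range (n + 1),
      ((n.choose x : ℝ) * p ^ x * q ^ (n - x)) * (x.descFactorial k : ℝ)
      = (n.descFactorial k : ℝ) * p ^ k := by
  by_cases hkn : k ≤ n
  · have key : ∀ j : ℕ, j ≤ n - k →
        n.choose (k + j) * ((k + j).descFactorial k) = n.descFactorial k * ((n - k).choose j) := by
      intro j hj
      have hkjn : k + j ≤ n := by omega
      have h1 := Nat.choose_mul (n := n) (Nat.le_add_right k j)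
      have h2 : (k + j).descFactorial k = Nat.factorial k * (k + j).choose k :=
        Nat.descFactorial_eq_factorial_mul_choose _ _
      have h3 : n.descFactorial k = Nat.factorial k * n.choose k :=
        Nat.descFactorial_eq_factorial_mul_choose _ _
      have h4 : k + j - k = j := by omega
      rw [h2, h3]
      calc n.choose (k + j) * (Nat.factorial k * (k + j).choose k)
          = Nat.factorial k * (n.choose (k + j) * (k + j).choose k) := by ring
        _ = Nat.factorial k * (n.choose k * (n - k).choose j) := by rw [h1, h4]
        _ = Nat.factorial k * n.choose k * ((n - k).choose j) := by ring
    rw [Finset.range_eq_Ico, ← Finset.sum_Ico_consecutive _ (Nat.zero_le k) (by omega : k ≤ n + 1)]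
    have hz : ∑ x ∈ Finset.Ico 0 k,
        ((n.choose x : ℝ) * p ^ x * q ^ (n - x)) * (x.descFactorial k : ℝ) = 0 := by
      apply Finset.sum_eq_zero
      intro x hx
      rw [Finset.mem_Ico] at hx
      rw [Nat.descFactorial_eq_zero_iff_lt.2 hx.2]
      simp
    rw [hz, zero_add, Finset.sum_Ico_eq_sum_range]
    have hrange : n + 1 - k = (n - k) + 1 := by omega
    rw [hrange]
    have hterm : ∀ j ∈ Finset.range ((n - k) + 1),
        ((n.choose (k + j) : ℝ) * p ^ (k + j) * q ^ (n - (k + j))) * ((k + j).descFactorial k : ℝ)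
        = ((n.descFactorial k : ℝ) * p ^ k) *
          (((n - k).choose j : ℝ) * p ^ j * q ^ ((n - k) - j)) := by
      intro j hj
      rw [Finset.mem_range] at hj
      have hcast : ((n.choose (k + j) : ℕ) : ℝ) * ((k + j).descFactorial k : ℝ)
          = ((n.descFactorial k : ℕ) : ℝ) * (((n - k).choose j : ℕ) : ℝ) := by
        rw [← Nat.cast_mul, ← Nat.cast_mul, key j (by omega)]
      have hsub : n - (k + j) = (n - k) - j := by omega
      rw [hsub, pow_add]
      linear_combination (p ^ k * p ^ j * q ^ ((n - k) - j)) * hcast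
    rw [Finset.sum_congr rfl hterm, ← Finset.mul_sum]
    have h5 : ∑ j ∈ Finset.range ((n - k) + 1),
        (((n - k).choose j : ℝ) * p ^ j * q ^ ((n - k) - j))
        = ∑ j ∈ Finset.range ((n - k) + 1), p ^ j * q ^ ((n - k) - j) * ((n - k).choose j : ℝ) := by
      apply Finset.sum_congr rfl
      intro j hj
      ring
    rw [h5, ← add_pow, hpq, one_pow, mul_one]
  · have h1 : ∀ x ∈ Finset.range (n + 1),
        ((n.choose x : ℝ) * p ^ x * q ^ (n - x)) * (x.descFactorial k : ℝ) = 0 := by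
      intro x hx
      rw [Finset.mem_range] at hx
      rw [Nat.descFactorial_eq_zero_iff_lt.2 (by omega)]
      simp
    rw [Finset.sum_eq_zero h1, Nat.descFactorial_eq_zero_iff_lt.2 (by omega)]
    simp


lemma binAux_castd3 (x : ℕ) :
    ((x.descFactorial 3 : ℕ) : ℝ) = (x:ℝ)^3 - 3*(x:ℝ)^2 + 2*(x:ℝ) := by
  rcases x with _|_|_|m
  · norm_num [Nat.descFactorial]
  · norm_num [Nat.descFactorial]
  · norm_num [Nat.descFactorial]
  · have h : (m+3).descFactorial 3 = (m+3)*((m+2)*((m+1)*1)) := by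
      simp [Nat.descFactorial]
      ring
    rw [h]
    push_cast
    ring

lemma binAux_castd4 (x : ℕ) :
    ((x.descFactorial 4 : ℕ) : ℝ) = (x:ℝ)^4 - 6*(x:ℝ)^3 + 11*(x:ℝ)^2 - 6*(x:ℝ) := by
  rcases x with _|_|_|_|m
  · norm_num [Nat.descFactorial]
  · norm_num [Nat.descFactorial]
  · norm_num [Nat.descFactorial]
  · norm_num [Nat.descFactorial]
  · have h : (m+4).descFactorial 4 = (m+4)*((m+3)*((m+2)*((m+1)*1))) := by
      simp [Nat.descFactorial]
      ring
    rw [h]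
    push_cast
    ring


open MeasureTheory Finset in
lemma binAux_integral {Ω : Type*} [MeasurableSpace Ω] (μ : Measure Ω) [IsProbabilityMeasure μ]
    {p q : ℝ} (hp : 0 ≤ p) (hq : 0 ≤ q) (hpq : p + q = 1) (n : ℕ)
    (X : Ω → ℕ) (hX : Measurable X)
    (hlaw : ∀ x : ℕ, μ {ω | X ω = x} = ENNReal.ofReal ((n.choose x : ℝ) * p ^ x * q ^ (n - x)))
    (g : ℕ → ℝ) :
    ∫ ω, g (X ω) ∂μ
      = ∑ x ∈ Finset.range (n + 1), ((n.choose x : ℝ) * p ^ x * q ^ (n - x)) * g x := by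
  set w : ℕ → ℝ := fun x => (n.choose x : ℝ) * p ^ x * q ^ (n - x) with hw_def
  have hw : ∀ x, 0 ≤ w x := fun x => by positivity
  set A : ℕ → Set Ω := fun x => X ⁻¹' {x} with hA_def
  have hA : ∀ x, MeasurableSet (A x) := fun x => hX (measurableSet_singleton x)
  have hμA : ∀ x, μ (A x) = ENNReal.ofReal (w x) := by
    intro x
    have : A x = {ω | X ω = x} := by ext ω; simp [hA_def]
    rw [this, hlaw x]
  have hdisj : (↑(Finset.range (n + 1)) : Set ℕ).PairwiseDisjoint A := by
    intro a _ b _ hab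
    simp only [Function.onFun, hA_def]
    rw [Set.disjoint_left]
    intro ω h1 h2
    exact hab (by simp at h1 h2; omega)
  have hsum1 : ∑ x ∈ Finset.range (n + 1), w x = 1 := by
    have := binAux_mom hpq 0 n
    simpa using this
  have hunion : μ (⋃ x ∈ Finset.range (n + 1), A x) = 1 := by
    rw [measure_biUnion_finset hdisj (fun x _ => hA x)]
    calc ∑ x ∈ Finset.range (n + 1), μ (A x)
        = ∑ x ∈ Finset.range (n + 1), ENNReal.ofReal (w x) := by
          exact Finset.sum_congr rfl fun x _ => hμA x
      _ = ENNReal.ofReal (∑ x ∈ Finset.range (n + 1), w x) :=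
          (ENNReal.ofReal_sum_of_nonneg (fun x _ => hw x)).symm
      _ = 1 := by rw [hsum1]; simp
  have hmeasU : MeasurableSet (⋃ x ∈ Finset.range (n + 1), A x) :=
    Finset.measurableSet_biUnion _ (fun x _ => hA x)
  have hcompl : μ ((⋃ x ∈ Finset.range (n + 1), A x)ᶜ) = 0 :=
    (prob_compl_eq_zero_iff hmeasU).2 hunion
  have hmem : (⋃ x ∈ Finset.range (n + 1), A x) ∈ MeasureTheory.ae μ := by
    rw [mem_ae_iff]; exact hcompl
  have haeg : (fun ω => g (X ω)) =ᵐ[μ]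
      (fun ω => ∑ x ∈ Finset.range (n + 1), (A x).indicator (fun _ => g x) ω) := by
    filter_upwards [hmem] with ω hω
    obtain ⟨s, hs, hωs⟩ := Set.mem_iUnion₂.1 hω
    have hXω : X ω = s := hωs
    have hind : ∀ y : ℕ, (A y).indicator (fun _ => g y) ω = if X ω = y then g y else 0 := by
      intro y
      by_cases h : X ω = y
      · rw [if_pos h]
        have : ω ∈ A y := h
        rw [Set.indicator_of_mem this]
      · rw [if_neg h]
        have : ω ∉ A y := h
        rw [Set.indicator_of_notMem this]
    rw [Finset.sum_congr rfl (fun y _ => hind y)]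
    rw [Finset.sum_ite_eq]
    rw [if_pos (by rw [hXω]; exact hs)]
  rw [integral_congr_ae haeg]
  rw [integral_finset_sum _ (fun x _ => (integrable_const (g x)).indicator (hA x))]
  apply Finset.sum_congr rfl
  intro x _
  rw [integral_indicator_const _ (hA x), measureReal_def, hμA x, ENNReal.toReal_ofReal (hw x)]
  rw [smul_eq_mul]


set_option maxHeartbeats 1000000 in
/-- **Cubic growth of the score-function estimator variance for a Binomial variable.**  Fix
`p ∈ (0,1)` and let `X n ∼ Bin(n,p)` for each integer `n ≥ 1`.  Then there exists a constant
`C = C(p)` such that for all `n ≥ 1`,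
`|Var[X n (X n - np)/(p(1-p))] - n³ p/(1-p)| ≤ C n²`.  In particular, the variance of the
score-function estimator grows as `n³ p/(1-p) + O(n²)`, cubically in `n`. -/
theorem binomial_score_function_estimator_variance_cubic
    {Ω : Type*} [MeasurableSpace Ω] (μ : Measure Ω) [IsProbabilityMeasure μ]
    (p : ℝ) (hp : p ∈ Set.Ioo (0 : ℝ) 1)
    (X : ℕ → Ω → ℕ) (hX : ∀ n, Measurable (X n))
    (hlaw : ∀ n x : ℕ, μ {ω | X n ω = x} =
      ENNReal.ofReal ((n.choose x : ℝ) * p ^ x * (1 - p) ^ (n - x))) :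
    ∃ C : ℝ, ∀ n : ℕ, 1 ≤ n →
      |variance (fun ω => (X n ω : ℝ) * ((X n ω : ℝ) - n * p) / (p * (1 - p))) μ -
        (n : ℝ) ^ 3 * p / (1 - p)| ≤ C * (n : ℝ) ^ 2 := by
  obtain ⟨hp0, hp1⟩ := hp
  have hq0 : 0 < 1 - p := by linarith
  have hpq : p + (1 - p) = 1 := by ring
  have hpqpos : 0 < p * (1 - p) := mul_pos hp0 hq0
  set a : ℝ := (7*p^2 - 12*p + 5)/(1-p)^2 - 1 with ha_def
  set b : ℝ := (-6*p^3 + 12*p^2 - 7*p + 1)/(p*(1-p)^2) with hb_def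
  refine ⟨|a| + |b|, ?_⟩
  intro n hn
  set g : ℕ → ℝ := fun x => (x : ℝ) * ((x : ℝ) - n * p) / (p * (1 - p)) with hg_def
  set w : ℕ → ℝ := fun x => (n.choose x : ℝ) * p ^ x * (1 - p) ^ (n - x) with hw_def
  -- integral formula
  have hint : ∀ G : ℕ → ℝ, ∫ ω, G (X n ω) ∂μ = ∑ x ∈ Finset.range (n + 1), w x * G x :=
    fun G => binAux_integral μ hp0.le hq0.le hpq n (X n) (hX n) (hlaw n) G
  -- a.e. boundedness of X n
  have haeb : ∀ᵐ ω ∂μ, X n ω ≤ n := by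
    rw [ae_iff]
    refine measure_mono_null (fun ω hω => ?_)
      (measure_iUnion_null (fun x : ℕ => ?_) :
        μ (⋃ x : ℕ, {ω | X n ω = n + 1 + x}) = 0)
    · simp only [Set.mem_setOf_eq, not_le] at hω
      exact Set.mem_iUnion.2 ⟨X n ω - (n + 1), by simp only [Set.mem_setOf_eq]; omega⟩
    · rw [hlaw n (n + 1 + x), Nat.choose_eq_zero_of_lt (by omega)]
      simp
  -- measurability
  have hmeasY : Measurable (fun ω => g (X n ω)) :=
    Measurable.comp (measurable_from_top : Measurable g) (hX n)
  -- Memℒp 2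
  have hY2 : MemLp (fun ω => g (X n ω)) 2 μ := by
    refine MemLp.of_bound hmeasY.aestronglyMeasurable ((n * n) / (p * (1 - p))) ?_
    filter_upwards [haeb] with ω hω
    have hx0 : (0:ℝ) ≤ (X n ω : ℝ) := Nat.cast_nonneg _
    have hxn : (X n ω : ℝ) ≤ n := Nat.cast_le.2 hω
    have hn0 : (0:ℝ) ≤ n := Nat.cast_nonneg _
    have h1 : |(X n ω : ℝ) * ((X n ω : ℝ) - n*p)| ≤ (n:ℝ) * n := by
      rw [abs_mul]
      have e1 : |(X n ω : ℝ)| ≤ n := by rw [abs_of_nonneg hx0]; exact hxn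
      have e2 : |(X n ω : ℝ) - n*p| ≤ n := by
        rw [abs_le]
        constructor <;> nlinarith
      exact mul_le_mul e1 e2 (abs_nonneg _) hn0
    rw [Real.norm_eq_abs, hg_def]
    simp only []
    rw [abs_div, abs_of_pos hpqpos]
    exact (div_le_div_iff_of_pos_right hpqpos).2 h1
  -- variance formula
  have hvar := variance_eq_sub hY2
  -- moment sums
  have S1 : ∑ x ∈ Finset.range (n + 1), w x * (x : ℝ) = (n : ℝ) * p := by
    have h := binAux_mom hpq 1 n
    simpa [Nat.descFactorial_one] using h
  have S2 : ∑ x ∈ Finset.range (n + 1), w x * ((x:ℝ)^2 - (x:ℝ))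
      = ((n:ℝ)^2 - n) * p^2 := by
    have h := binAux_mom hpq 2 n
    have c2 : ∀ m : ℕ, ((m.descFactorial 2 : ℕ) : ℝ) = (m:ℝ)^2 - m := by
      intro m
      rw [Nat.cast_descFactorial_two]
      ring
    rw [c2 n] at h
    rw [← h]
    exact Finset.sum_congr rfl fun x _ => by rw [c2 x]
  have S3 : ∑ x ∈ Finset.range (n + 1), w x * ((x:ℝ)^3 - 3*(x:ℝ)^2 + 2*(x:ℝ))
      = ((n:ℝ)^3 - 3*(n:ℝ)^2 + 2*n) * p^3 := by
    have h := binAux_mom hpq 3 n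
    rw [binAux_castd3 n] at h
    rw [← h]
    exact Finset.sum_congr rfl fun x _ => by rw [binAux_castd3 x]
  have S4 : ∑ x ∈ Finset.range (n + 1), w x * ((x:ℝ)^4 - 6*(x:ℝ)^3 + 11*(x:ℝ)^2 - 6*(x:ℝ))
      = ((n:ℝ)^4 - 6*(n:ℝ)^3 + 11*(n:ℝ)^2 - 6*n) * p^4 := by
    have h := binAux_mom hpq 4 n
    rw [binAux_castd4 n] at h
    rw [← h]
    exact Finset.sum_congr rfl fun x _ => by rw [binAux_castd4 x]
  -- power sums
  have P2 : ∑ x ∈ Finset.range (n + 1), w x * (x:ℝ)^2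
      = ((n:ℝ)^2 - n) * p^2 + (n:ℝ) * p := by
    rw [← S2, ← S1, ← Finset.sum_add_distrib]
    exact Finset.sum_congr rfl fun x _ => by ring
  have P3 : ∑ x ∈ Finset.range (n + 1), w x * (x:ℝ)^3
      = ((n:ℝ)^3 - 3*(n:ℝ)^2 + 2*n) * p^3 + 3*(((n:ℝ)^2 - n) * p^2) + (n:ℝ) * p := by
    rw [← S3, ← S2, ← S1, Finset.mul_sum, ← Finset.sum_add_distrib, ← Finset.sum_add_distrib]
    exact Finset.sum_congr rfl fun x _ => by ring
  have P4 : ∑ x ∈ Finset.range (n + 1), w x * (x:ℝ)^4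
      = ((n:ℝ)^4 - 6*(n:ℝ)^3 + 11*(n:ℝ)^2 - 6*n) * p^4
        + 6*(((n:ℝ)^3 - 3*(n:ℝ)^2 + 2*n) * p^3) + 7*(((n:ℝ)^2 - n) * p^2) + (n:ℝ) * p := by
    rw [← S4, ← S3, ← S2, ← S1, Finset.mul_sum, Finset.mul_sum,
      ← Finset.sum_add_distrib, ← Finset.sum_add_distrib, ← Finset.sum_add_distrib]
    exact Finset.sum_congr rfl fun x _ => by ring
  -- first moment of the estimator
  have hEY : ∫ ω, g (X n ω) ∂μ = (n : ℝ) := by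
    rw [hint g]
    have hterm : ∀ x ∈ Finset.range (n + 1),
        w x * g x = (w x * (x:ℝ)^2) / (p * (1-p)) - (n*p/(p*(1-p))) * (w x * (x:ℝ)) := by
      intro x _
      rw [hg_def]
      field_simp
    rw [Finset.sum_congr rfl hterm, Finset.sum_sub_distrib, ← Finset.sum_div, ← Finset.mul_sum,
      P2, S1]
    field_simp
    ring
  -- second moment of the estimator
  have hEY2 : ∫ ω, (g (X n ω))^2 ∂μ
      = ((((n:ℝ)^4 - 6*(n:ℝ)^3 + 11*(n:ℝ)^2 - 6*n) * p^4
          + 6*(((n:ℝ)^3 - 3*(n:ℝ)^2 + 2*n) * p^3) + 7*(((n:ℝ)^2 - n) * p^2) + (n:ℝ) * p)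
        - 2*n*p*(((n:ℝ)^3 - 3*(n:ℝ)^2 + 2*n) * p^3 + 3*(((n:ℝ)^2 - n) * p^2) + (n:ℝ) * p)
        + (n:ℝ)^2*p^2*(((n:ℝ)^2 - n) * p^2 + (n:ℝ) * p)) / (p*(1-p))^2 := by
    rw [hint (fun x => (g x)^2)]
    have hterm : ∀ x ∈ Finset.range (n + 1),
        w x * (g x)^2 = ((w x * (x:ℝ)^4) - 2*n*p*(w x * (x:ℝ)^3)
          + (n:ℝ)^2*p^2*(w x * (x:ℝ)^2)) / (p*(1-p))^2 := by
      intro x _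
      rw [hg_def]
      field_simp
      ring
    rw [Finset.sum_congr rfl hterm, ← Finset.sum_div]
    rw [Finset.sum_add_distrib, Finset.sum_sub_distrib, ← Finset.mul_sum, ← Finset.mul_sum]
    rw [P4, P3, P2]
  -- assemble
  have hYsq : (fun ω => g (X n ω)) ^ 2 = fun ω => (g (X n ω))^2 := by
    funext ω
    simp [Pi.pow_apply]
  have hvar' : variance (fun ω => g (X n ω)) μ
      - (n : ℝ) ^ 3 * p / (1 - p) = a * (n:ℝ)^2 + b * (n:ℝ) := by
    rw [hvar, hYsq, hEY2, hEY, ha_def, hb_def]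
    field_simp
    ring
  have hgoal : (fun ω => (X n ω : ℝ) * ((X n ω : ℝ) - n * p) / (p * (1 - p)))
      = fun ω => g (X n ω) := rfl
  rw [hgoal, hvar']
  have hn1 : (1:ℝ) ≤ (n:ℝ) := by exact_mod_cast hn
  have hnn : (n:ℝ) ≤ (n:ℝ)^2 := by nlinarith
  calc |a * (n:ℝ)^2 + b * (n:ℝ)|
      ≤ |a * (n:ℝ)^2| + |b * (n:ℝ)| := abs_add_le _ _
    _ = |a| * (n:ℝ)^2 + |b| * (n:ℝ) := by
        rw [abs_mul, abs_mul, abs_of_nonneg (by positivity : (0:ℝ) ≤ (n:ℝ)^2),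
          abs_of_nonneg (by positivity : (0:ℝ) ≤ (n:ℝ))]
    _ ≤ |a| * (n:ℝ)^2 + |b| * (n:ℝ)^2 := by
        have := abs_nonneg b
        nlinarith
    _ = (|a| + |b|) * (n:ℝ)^2 := by ring


end
end

section
/- The straight-through gradient estimator as a combination of smoothed stochastic derivatives: fix p ∈ (0,1) and let X ~ Ber(p). Define the right smoothed stochastic derivative δ̃_R = (1/(1−p))·1{X=0} and the left smoothed stochastic derivative δ̃_L = (1/p)·1{X=1}. Then E[δ̃_R] = E[δ̃_L] = 1 = d/dq E[Ber(q)] at q = p, and the convex combination p·δ̃_L + (1−p)·δ̃_R equals 1 almost surely, recovering the constant derivative 1 assigned to a Bernoulli sample by the straight-through estimator. -/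
open MeasureTheory Filter Topology ProbabilityTheory Set

noncomputable section

/-- **The straight-through gradient estimator as a combination of smoothed stochastic
derivatives.**  Fix `p ∈ (0,1)` and let `X ∼ Ber(p)`.  Define the right smoothed stochastic
derivative `δ̃_R = (1/(1-p))·1{X=0}` and the left smoothed stochastic derivative
`δ̃_L = (1/p)·1{X=1}`.  Then `E[δ̃_R] = E[δ̃_L] = 1 = d/dq E[Ber(q)]` at `q = p`, and the
convex combination `p·δ̃_L + (1-p)·δ̃_R` equals `1` almost surely, recovering the constant
derivative `1` assigned to a Bernoulli sample by the straight-through estimator. -/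
theorem straight_through_from_smoothed_stochastic_derivatives
    {Ω : Type*} [MeasurableSpace Ω] (μ : Measure Ω) [IsProbabilityMeasure μ]
    (p : ℝ) (hp : p ∈ Set.Ioo (0 : ℝ) 1)
    (X : Ω → ℝ) (hX : Measurable X)
    (h01 : ∀ᵐ ω ∂μ, X ω = 0 ∨ X ω = 1)
    (hlaw : μ {ω | X ω = 1} = ENNReal.ofReal p) :
    (∫ ω, (1 / (1 - p)) * ({ω' : Ω | X ω' = 0}).indicator (fun _ => (1 : ℝ)) ω ∂μ) = 1
    ∧ (∫ ω, (1 / p) * ({ω' : Ω | X ω' = 1}).indicator (fun _ => (1 : ℝ)) ω ∂μ) = 1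
    ∧ HasDerivAt (fun q : ℝ => q) 1 p
    ∧ (∀ᵐ ω ∂μ,
        p * ((1 / p) * ({ω' : Ω | X ω' = 1}).indicator (fun _ => (1 : ℝ)) ω) +
          (1 - p) * ((1 / (1 - p)) * ({ω' : Ω | X ω' = 0}).indicator (fun _ => (1 : ℝ)) ω)
          = 1) := by
  obtain ⟨hp0, hp1⟩ := hp
  have hm0 : MeasurableSet {ω | X ω = 0} := hX (measurableSet_singleton 0)
  have hm1 : MeasurableSet {ω | X ω = 1} := hX (measurableSet_singleton 1)
  have hdisj : Disjoint {ω | X ω = 0} {ω | X ω = 1} := by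
    rw [Set.disjoint_left]
    intro ω h0 h1
    simp only [Set.mem_setOf_eq] at h0 h1
    rw [h0] at h1; norm_num at h1
  have hunion : μ ({ω | X ω = 0} ∪ {ω | X ω = 1}) = 1 := by
    have : ∀ᵐ ω ∂μ, ω ∈ {ω | X ω = 0} ∪ {ω | X ω = 1} := by
      filter_upwards [h01] with ω h
      rcases h with h | h <;> simp [h]
    have h' := measure_congr (Filter.eventuallyEq_univ.mpr this)
    exact h'.trans measure_univ
  have hsum : μ {ω | X ω = 0} + μ {ω | X ω = 1} = 1 := by
    rw [← measure_union hdisj hm1, hunion]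
  have hμ0 : μ {ω | X ω = 0} = ENNReal.ofReal (1 - p) := by
    have hfin : μ {ω | X ω = 1} ≠ ⊤ := (measure_lt_top μ _).ne
    have : μ {ω | X ω = 0} = 1 - μ {ω | X ω = 1} := by
      rw [← hsum]; rw [ENNReal.add_sub_cancel_right hfin]
    rw [this, hlaw, show (1:ENNReal) = ENNReal.ofReal 1 by simp,
      ← ENNReal.ofReal_sub _ hp0.le]
  have int0 : (∫ ω, ({ω' : Ω | X ω' = 0}).indicator (fun _ => (1 : ℝ)) ω ∂μ) = 1 - p := by
    rw [integral_indicator_const _ hm0, measureReal_def, hμ0]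
    simp [ENNReal.toReal_ofReal (by linarith : (0:ℝ) ≤ 1 - p)]
  have int1 : (∫ ω, ({ω' : Ω | X ω' = 1}).indicator (fun _ => (1 : ℝ)) ω ∂μ) = p := by
    rw [integral_indicator_const _ hm1, measureReal_def, hlaw]
    simp [ENNReal.toReal_ofReal hp0.le]
  refine ⟨?_, ?_, hasDerivAt_id p, ?_⟩
  · rw [MeasureTheory.integral_const_mul, int0]
    field_simp
  · rw [MeasureTheory.integral_const_mul, int1]
    field_simp
  · filter_upwards [h01] with ω h
    rcases h with h | h
    · have h0 : ω ∈ {ω' : Ω | X ω' = 0} := h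
      have h1 : ω ∉ {ω' : Ω | X ω' = 1} := by simp [Set.mem_setOf_eq, h]
      rw [Set.indicator_of_mem h0, Set.indicator_of_notMem h1]
      field_simp
      norm_num
    · have h1 : ω ∈ {ω' : Ω | X ω' = 1} := h
      have h0 : ω ∉ {ω' : Ω | X ω' = 0} := by simp [Set.mem_setOf_eq, h]
      rw [Set.indicator_of_mem h1, Set.indicator_of_notMem h0]
      field_simp
      norm_num

end
end

section
/- Forward jump rate of an inversion-parameterized categorical variable: let p₁, …, p_n : I → (0,1) be differentiable functions of a real parameter θ on an open interval I with Σ_{i=1}^n p_i(θ) = 1, and on Ω = [0,1] with the uniform measure define X(θ)(ω) = x for the unique x with Σ_{i<x} p_i(θ) ≤ ω < Σ_{i≤x} p_i(θ), so X(θ) takes value x with probability p_x(θ). Fix θ and x ∈ {1, …, n−1} with Σ_{i=1}^x p_i'(θ) < 0. Then lim_{ε→0⁺} P(X(θ+ε) = x+1 | X(θ) = x)/ε = |Σ_{i=1}^x p_i'(θ)|/p_x(θ). -/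
open MeasureTheory Filter Topology ProbabilityTheory Set

noncomputable section

/-- **Forward jump rate of an inversion-parameterized categorical variable.**  Let
`pr 1, …, pr n : I → (0,1)` be differentiable functions of a real parameter `θ` on an open
set `I` with `Σ_{i=1}^n pr i θ = 1`, and on `Ω = [0,1]` with the uniform measure define
`X θ ω = x` for the unique `x ∈ {1,…,n}` with `Σ_{i<x} pr i θ ≤ ω < Σ_{i≤x} pr i θ`, so
that `X θ` takes the value `x` with probability `pr x θ`.  Fix `θ ∈ I` and
`x ∈ {1, …, n-1}` with `Σ_{i=1}^x pr' i θ < 0` (where `pr' i θ` is the derivative of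
`pr i` at `θ`).  Then
`lim_{ε→0⁺} P(X (θ+ε) = x+1 | X θ = x)/ε = |Σ_{i=1}^x pr' i θ| / pr x θ`. -/
theorem categorical_forward_jump_rate
    (n : ℕ) (hn : 1 ≤ n)
    (I : Set ℝ) (hI : IsOpen I) (θ : ℝ) (hθ : θ ∈ I)
    (pr pr' : ℕ → ℝ → ℝ)
    (hrange : ∀ i ∈ Finset.Icc 1 n, ∀ t ∈ I, pr i t ∈ Set.Ioo (0 : ℝ) 1)
    (hderiv : ∀ i ∈ Finset.Icc 1 n, ∀ t ∈ I, HasDerivAt (pr i) (pr' i t) t)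
    (hsum : ∀ t ∈ I, ∑ i ∈ Finset.Icc 1 n, pr i t = 1)
    (μ : Measure ℝ) (hμ : μ = volume.restrict (Set.Icc (0 : ℝ) 1))
    (X : ℝ → ℝ → ℕ)
    (hX : ∀ t ∈ I, ∀ ω ∈ Set.Ico (0 : ℝ) 1,
      X t ω ∈ Finset.Icc 1 n ∧
      (∑ i ∈ Finset.Icc 1 (X t ω - 1), pr i t) ≤ ω ∧
      ω < ∑ i ∈ Finset.Icc 1 (X t ω), pr i t)
    (x : ℕ) (hx1 : 1 ≤ x) (hxn : x < n)
    (hneg : (∑ i ∈ Finset.Icc 1 x, pr' i θ) < 0) :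
    Tendsto
      (fun ε : ℝ => ((μ[|{ω | X θ ω = x}]) {ω | X (θ + ε) ω = x + 1}).toReal / ε)
      (𝓝[>] (0 : ℝ)) (𝓝 (|∑ i ∈ Finset.Icc 1 x, pr' i θ| / pr x θ)) := by
  classical
  set S : ℝ → ℕ → ℝ := fun t k => ∑ i ∈ Finset.Icc 1 k, pr i t with hSdef
  set D : ℝ := ∑ i ∈ Finset.Icc 1 x, pr' i θ with hDdef
  have hxmem : x ∈ Finset.Icc 1 n := Finset.mem_Icc.2 ⟨hx1, le_of_lt hxn⟩
  have hx1mem : x + 1 ∈ Finset.Icc 1 n := Finset.mem_Icc.2 ⟨by omega, by omega⟩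
  -- monotonicity of partial sums
  have hmono : ∀ t ∈ I, ∀ j k : ℕ, j ≤ k → k ≤ n → S t j ≤ S t k := by
    intro t ht j k hjk hkn
    apply Finset.sum_le_sum_of_subset_of_nonneg (Finset.Icc_subset_Icc_right hjk)
    intro i hi _
    have hi' : i ∈ Finset.Icc 1 n := by
      simp only [Finset.mem_Icc] at hi ⊢; omega
    exact (hrange i hi' t ht).1.le
  have hS0 : ∀ t, S t 0 = 0 := by
    intro t; simp [hSdef]
  have hSnonneg : ∀ t ∈ I, ∀ k, k ≤ n → 0 ≤ S t k := by
    intro t ht k hk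
    have := hmono t ht 0 k (Nat.zero_le k) hk
    rwa [hS0] at this
  have hSle1 : ∀ t ∈ I, ∀ k, k ≤ n → S t k ≤ 1 := by
    intro t ht k hk
    have := hmono t ht k n hk le_rfl
    exact this.trans (le_of_eq (hsum t ht))
  -- characterization of X via partial sums
  have hchar : ∀ t ∈ I, ∀ ω ∈ Set.Ico (0:ℝ) 1, ∀ y ∈ Finset.Icc 1 n,
      (X t ω = y ↔ S t (y-1) ≤ ω ∧ ω < S t y) := by
    intro t ht ω hω y hy
    obtain ⟨hz, hz1, hz2⟩ := hX t ht ω hω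
    constructor
    · rintro rfl; exact ⟨hz1, hz2⟩
    · rintro ⟨hy1, hy2⟩
      by_contra hne
      simp only [Finset.mem_Icc] at hy hz
      rcases Nat.lt_or_ge (X t ω) y with h | h
      · have hle : S t (X t ω) ≤ S t (y-1) := hmono t ht _ _ (by omega) (by omega)
        have : (S t (X t ω) : ℝ) ≤ ω := le_trans hle hy1
        exact absurd this (not_le.2 hz2)
      · have hlt : y < X t ω := lt_of_le_of_ne h (fun h' => hne h'.symm)
        have hle : S t y ≤ S t (X t ω - 1) := hmono t ht _ _ (by omega) (by omega)
        have : (S t y : ℝ) ≤ ω := le_trans hle hz1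
        exact absurd this (not_le.2 hy2)
  -- the endpoints of the interval for outcome `x` at parameter `θ`
  set a : ℝ := S θ (x - 1) with hadef
  set b : ℝ := S θ x with hbdef
  have hp : 0 < pr x θ := (hrange x hxmem θ hθ).1
  have hab : b = a + pr x θ := by
    have h0 : (1:ℕ) ≤ (x-1) + 1 := by omega
    have h := Finset.sum_Icc_succ_top h0 (fun i => pr i θ)
    have hx' : x - 1 + 1 = x := by omega
    rw [hx'] at h
    exact h
  have ha0 : 0 ≤ a := hSnonneg θ hθ (x-1) (by omega)
  have hb1 : b ≤ 1 := hSle1 θ hθ x (le_of_lt hxn)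
  have haltb : a < b := by rw [hab]; linarith
  have hsucc : S θ (x+1) = b + pr (x+1) θ := Finset.sum_Icc_succ_top (by omega) (fun i => pr i θ)
  have hpsucc : 0 < pr (x+1) θ := (hrange (x+1) hx1mem θ hθ).1
  -- the conditioning event
  set A : Set ℝ := {ω | X θ ω = x} with hAdef
  have hAeq : A ∩ Set.Ico (0:ℝ) 1 = Set.Ico a b := by
    ext ω
    simp only [hAdef, Set.mem_inter_iff, Set.mem_setOf_eq, Set.mem_Ico]
    constructor
    · rintro ⟨h1, h2⟩
      exact (hchar θ hθ ω h2 x hxmem).1 h1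
    · rintro ⟨h1, h2⟩
      have hω : ω ∈ Set.Ico (0:ℝ) 1 := ⟨le_trans ha0 h1, lt_of_lt_of_le h2 hb1⟩
      exact ⟨(hchar θ hθ ω hω x hxmem).2 ⟨h1, h2⟩, hω.1, hω.2⟩
  have haeeq : (A ∩ Set.Icc (0:ℝ) 1 : Set ℝ) =ᵐ[volume] (Set.Ico a b : Set ℝ) := by
    rw [MeasureTheory.ae_eq_set]
    constructor
    · have hsub : (A ∩ Set.Icc (0:ℝ) 1) \ Set.Ico a b ⊆ {(1:ℝ)} := by
        rintro ω ⟨⟨hω1, hω2⟩, hω3⟩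
        simp only [Set.mem_singleton_iff]
        by_contra hne
        have hω' : ω ∈ Set.Ico (0:ℝ) 1 := ⟨hω2.1, lt_of_le_of_ne hω2.2 hne⟩
        exact hω3 (hAeq ▸ Set.mem_inter hω1 hω' : ω ∈ Set.Ico a b)
      exact measure_mono_null hsub (measure_singleton 1)
    · have : Set.Ico a b \ (A ∩ Set.Icc (0:ℝ) 1) = ∅ := by
        apply Set.diff_eq_empty.2
        rw [← hAeq]
        exact Set.inter_subset_inter_right A Set.Ico_subset_Icc_self
      rw [this]; simp
  have hrestr : μ.restrict A = volume.restrict (Set.Ico a b) := by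
    rw [hμ, Measure.restrict_restrict' measurableSet_Icc]
    exact Measure.restrict_congr_set haeeq
  have hμA : μ A = ENNReal.ofReal (pr x θ) := by
    rw [hμ, Measure.restrict_apply' measurableSet_Icc, measure_congr haeeq,
      Real.volume_Ico]
    congr 1
    rw [hab]; ring
  -- derivative and continuity facts
  have hF : HasDerivAt (fun t => S t x) D θ := by
    apply HasDerivAt.fun_sum
    intro i hi
    exact hderiv i (by simp only [Finset.mem_Icc] at hi ⊢; omega) θ hθ
  have hF1 : HasDerivAt (fun t => S t (x+1)) (∑ i ∈ Finset.Icc 1 (x+1), pr' i θ) θ := by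
    apply HasDerivAt.fun_sum
    intro i hi
    exact hderiv i (by simp only [Finset.mem_Icc] at hi ⊢; omega) θ hθ
  have hparam : Tendsto (fun ε : ℝ => θ + ε) (𝓝 0) (𝓝 θ) := by
    have : Tendsto (fun ε : ℝ => θ + ε) (𝓝 0) (𝓝 (θ + 0)) :=
      (continuous_const.add continuous_id).tendsto 0
    simpa using this
  have hparam' : Tendsto (fun ε : ℝ => θ + ε) (𝓝[>] 0) (𝓝 θ) :=
    hparam.mono_left nhdsWithin_le_nhds
  have hevI : ∀ᶠ ε in 𝓝[>] (0:ℝ), θ + ε ∈ I :=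
    hparam'.eventually (hI.eventually_mem hθ)
  have hmaps : Tendsto (fun ε : ℝ => θ + ε) (𝓝[>] 0) (𝓝[≠] θ) := by
    apply tendsto_nhdsWithin_of_tendsto_nhds_of_eventually_within _ hparam'
    filter_upwards [self_mem_nhdsWithin] with ε hε
    have : (0:ℝ) < ε := hε
    simp only [Set.mem_compl_iff, Set.mem_singleton_iff]
    linarith
  have hslope : Tendsto (fun ε : ℝ => (S (θ+ε) x - b) / ε) (𝓝[>] 0) (𝓝 D) := by
    have h0 := (hasDerivAt_iff_tendsto_slope.1 hF).comp hmaps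
    apply h0.congr
    intro ε
    simp only [Function.comp_apply, slope_def_field, add_sub_cancel_left]
    rfl
  have hev2 : ∀ᶠ ε in 𝓝[>] (0:ℝ), S (θ+ε) x < b := by
    have h1 : ∀ᶠ ε in 𝓝[>] (0:ℝ), (S (θ+ε) x - b) / ε < 0 :=
      hslope.eventually_lt_const hneg
    filter_upwards [h1, self_mem_nhdsWithin] with ε h1 h2
    have hε : (0:ℝ) < ε := h2
    by_contra hcon
    push_neg at hcon
    have : 0 ≤ (S (θ+ε) x - b) / ε := div_nonneg (by linarith) hε.le
    linarith
  have hcontx : Tendsto (fun ε : ℝ => S (θ+ε) x) (𝓝[>] 0) (𝓝 b) :=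
    (hF.continuousAt.tendsto).comp hparam'
  have hev3 : ∀ᶠ ε in 𝓝[>] (0:ℝ), a < S (θ+ε) x :=
    hcontx.eventually_const_lt haltb
  have hcontx1 : Tendsto (fun ε : ℝ => S (θ+ε) (x+1)) (𝓝[>] 0) (𝓝 (S θ (x+1))) :=
    (hF1.continuousAt.tendsto).comp hparam'
  have hev4 : ∀ᶠ ε in 𝓝[>] (0:ℝ), b < S (θ+ε) (x+1) :=
    hcontx1.eventually_const_lt (by rw [hsucc]; linarith)
  -- eventual formula for the conditional probability
  have heq : ∀ᶠ ε in 𝓝[>] (0:ℝ),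
      ((μ[|A]) {ω | X (θ + ε) ω = x + 1}).toReal / ε
        = ((b - S (θ+ε) x) / pr x θ) / ε := by
    filter_upwards [hevI, hev2, hev3, hev4] with ε h1 h2 h3 h4
    have hBeq : {ω | X (θ + ε) ω = x + 1} ∩ Set.Ico a b = Set.Ico (S (θ+ε) x) b := by
      ext ω
      simp only [Set.mem_inter_iff, Set.mem_setOf_eq, Set.mem_Ico]
      constructor
      · rintro ⟨hB, hω1, hω2⟩
        have hω : ω ∈ Set.Ico (0:ℝ) 1 := ⟨le_trans ha0 hω1, lt_of_lt_of_le hω2 hb1⟩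
        have := (hchar (θ+ε) h1 ω hω (x+1) hx1mem).1 hB
        simp only [Nat.add_sub_cancel] at this
        exact ⟨this.1, hω2⟩
      · rintro ⟨hω1, hω2⟩
        have hω : ω ∈ Set.Ico (0:ℝ) 1 :=
          ⟨le_trans ha0 (le_trans h3.le hω1), lt_of_lt_of_le hω2 hb1⟩
        refine ⟨(hchar (θ+ε) h1 ω hω (x+1) hx1mem).2 ?_, le_trans h3.le hω1, hω2⟩
        simp only [Nat.add_sub_cancel]
        exact ⟨hω1, lt_of_lt_of_le hω2 (le_of_lt h4)⟩
    have hcond : (μ[|A]) {ω | X (θ + ε) ω = x + 1}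
        = (μ A)⁻¹ * volume (Set.Ico (S (θ+ε) x) b) := by
      rw [ProbabilityTheory.cond, Measure.smul_apply, smul_eq_mul, hrestr,
        Measure.restrict_apply' measurableSet_Ico, hBeq]
    rw [hcond, hμA, Real.volume_Ico, ENNReal.toReal_mul, ENNReal.toReal_inv,
      ENNReal.toReal_ofReal hp.le, ENNReal.toReal_ofReal (by linarith)]
    ring
  -- the limit of the model expression
  have htend : Tendsto (fun ε : ℝ => ((b - S (θ+ε) x) / pr x θ) / ε) (𝓝[>] 0)
      (𝓝 (|D| / pr x θ)) := by
    have h1 : Tendsto (fun ε : ℝ => -((S (θ+ε) x - b) / ε) / pr x θ) (𝓝[>] 0)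
        (𝓝 (-D / pr x θ)) := hslope.neg.div_const (pr x θ)
    have h2 : -D / pr x θ = |D| / pr x θ := by rw [abs_of_neg hneg]
    rw [← h2]
    apply h1.congr
    intro ε
    ring
  exact htend.congr' (heq.mono fun ε h => h.symm)

end
end
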